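/- arXiv:math-ph/0202013 — 4 statements merged into one kernel-verified Lean document; each statement's English description precedes it below -/
import Mathlib

section
/- There exists a constant k > 0 such that for all integers N ≥ 1, the inverse spectral gap S(N,2) of the birth-and-death toy model with d = 2 (i.e. α = 1/2, state space {0,…,N²}) satisfies N/k ≤ S(N,2) ≤ k N. -/
/-!
Birth-and-death toy model for droplet evolution: in dimension `d = 2`
(i.e. `α = 1/2`, state space `{0,…,N²}`), the inverse spectral gap
`S(N,2)` is of order `N`.
-/

open Finset

noncomputable section

/-- The exponent `α = (d-1)/d`. -/
def alphaOf (d : ℕ) : ℝ := ((d : ℝ) - 1) / d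

/-- Normalization `Z_N = ∑_{x=0}^{N^d} exp(-x^α)`. -/
def Ztoy (d N : ℕ) : ℝ :=
  ∑ x ∈ Finset.range (N ^ d + 1), Real.exp (-(x : ℝ) ^ alphaOf d)

/-- The reversible probability measure `μ_N(x) = exp(-x^α)/Z_N`. -/
def muToy (d N : ℕ) (x : ℕ) : ℝ :=
  Real.exp (-(x : ℝ) ^ alphaOf d) / Ztoy d N

/-- The birth rate `b(x) = (max(x,1))^α`. -/
def bToy (d : ℕ) (x : ℕ) : ℝ := ((max x 1 : ℕ) : ℝ) ^ alphaOf d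

/-- Dirichlet form `E_N(f) = ∑_{x=0}^{N^d-1} μ_N(x) b(x) (f(x+1)-f(x))²`. -/
def dirToy (d N : ℕ) (f : ℕ → ℝ) : ℝ :=
  ∑ x ∈ Finset.range (N ^ d), muToy d N x * bToy d x * (f (x + 1) - f x) ^ 2

/-- Mean of `f` under `μ_N`. -/
def meanToy (d N : ℕ) (f : ℕ → ℝ) : ℝ :=
  ∑ x ∈ Finset.range (N ^ d + 1), muToy d N x * f x

/-- Variance of `f` under `μ_N`. -/
def varToy (d N : ℕ) (f : ℕ → ℝ) : ℝ :=
  ∑ x ∈ Finset.range (N ^ d + 1), muToy d N x * (f x - meanToy d N f) ^ 2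

/-- The inverse spectral gap `S(N,d)`: the smallest constant `c` such that
`Var_{μ_N}(f) ≤ c · E_N(f)` for all `f`. -/
def invGapToy (d N : ℕ) : ℝ :=
  sInf {c : ℝ | ∀ f : ℕ → ℝ, varToy d N f ≤ c * dirToy d N f}

namespace ToyModelProof

open Real

lemma alpha2 : alphaOf 2 = 1/2 := by norm_num [alphaOf]

lemma rpow_half (x : ℕ) : (x : ℝ) ^ alphaOf 2 = Real.sqrt x := by
  rw [alpha2, ← Real.sqrt_eq_rpow]

lemma mu_eq (N x : ℕ) : muToy 2 N x = Real.exp (-Real.sqrt x) / Ztoy 2 N := by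
  rw [muToy, rpow_half]

lemma b_eq (x : ℕ) : bToy 2 x = Real.sqrt ((max x 1 : ℕ) : ℝ) := by
  rw [bToy, rpow_half]

lemma Ztoy_eq (N : ℕ) :
    Ztoy 2 N = ∑ x ∈ Finset.range (N ^ 2 + 1), Real.exp (-Real.sqrt x) := by
  unfold Ztoy; exact Finset.sum_congr rfl fun x _ => by rw [rpow_half]

/-- Mean value inequality helper. -/
lemma mvt1 (F F' : ℝ → ℝ) (a : ℝ) (hF : Continuous F)
    (hF' : ∀ t ∈ Set.Ioo a (a+1), HasDerivAt F (F' t) t) :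
    ∃ c ∈ Set.Ioo a (a+1), F (a+1) - F a = F' c := by
  obtain ⟨c, hc, hceq⟩ := exists_hasDerivAt_eq_slope F F' (by linarith : a < a+1)
    hF.continuousOn hF'
  refine ⟨c, hc, ?_⟩
  rw [hceq]; simp

lemma hasDeriv_exp_sqrt (b t : ℝ) (ht : 0 < t) :
    HasDerivAt (fun s => Real.exp (b * Real.sqrt s))
      (Real.exp (b * Real.sqrt t) * (b / (2 * Real.sqrt t))) t := by
  have h1 := ((Real.hasDerivAt_sqrt (ne_of_gt ht)).const_mul b).exp
  convert h1 using 1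
  ring




/-- `g1 t = √t · exp(√t/2)`. -/
def g1 (t : ℝ) : ℝ := Real.sqrt t * Real.exp ((1/2) * Real.sqrt t)

lemma g1_cont : Continuous g1 :=
  Real.continuous_sqrt.mul (Real.continuous_exp.comp (continuous_const.mul Real.continuous_sqrt))

lemma step1 (v : ℕ) :
    Real.exp ((1/2) * Real.sqrt v) ≤ 4 * (g1 ((v:ℝ)+1) - g1 v) := by
  have hder : ∀ t ∈ Set.Ioo (v:ℝ) ((v:ℝ)+1), HasDerivAt g1
      ((fun t => (1/(2*Real.sqrt t)) * Real.exp ((1/2)*Real.sqrt t)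
      + Real.sqrt t * (Real.exp ((1/2)*Real.sqrt t) * ((1/2) / (2*Real.sqrt t)))) t) t := by
    intro t ht
    have ht0 : 0 < t := lt_of_le_of_lt (Nat.cast_nonneg v) ht.1
    exact (Real.hasDerivAt_sqrt (ne_of_gt ht0)).mul (hasDeriv_exp_sqrt (1/2) t ht0)
  obtain ⟨c, hc, heq⟩ := mvt1 g1 _ v g1_cont hder
  · have hc0 : (0:ℝ) < c := lt_of_le_of_lt (Nat.cast_nonneg v) hc.1
    have hsc : 0 < Real.sqrt c := Real.sqrt_pos.2 hc0
    have hvc : Real.sqrt v ≤ Real.sqrt c := Real.sqrt_le_sqrt hc.1.le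
    rw [heq]
    have e1 : Real.exp ((1/2)*Real.sqrt (v:ℝ)) ≤ Real.exp ((1/2)*Real.sqrt c) :=
      Real.exp_le_exp.2 (by linarith)
    have key : Real.sqrt c * (Real.exp ((1/2)*Real.sqrt c) * ((1/2)/(2*Real.sqrt c)))
        = Real.exp ((1/2)*Real.sqrt c)/4 := by
      field_simp; ring
    have h0 : 0 ≤ (1/(2*Real.sqrt c)) * Real.exp ((1/2)*Real.sqrt c) := by positivity
    nlinarith [Real.exp_pos ((1/2)*Real.sqrt c)]

lemma sumA (x : ℕ) :
    (∑ v ∈ range x, Real.exp ((1/2) * Real.sqrt v))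
      ≤ 4 * (Real.sqrt x * Real.exp ((1/2) * Real.sqrt x)) := by
  have h : ∀ v ∈ range x, Real.exp ((1/2)*Real.sqrt v)
      ≤ 4 * ((fun n : ℕ => g1 n) (v+1) - (fun n : ℕ => g1 n) v) := by
    intro v _
    have := step1 v
    simpa [Nat.cast_add, Nat.cast_one] using this
  calc (∑ v ∈ range x, Real.exp ((1/2)*Real.sqrt v))
      ≤ ∑ v ∈ range x, 4 * ((fun n : ℕ => g1 n) (v+1) - (fun n : ℕ => g1 n) v) :=
        Finset.sum_le_sum h
    _ = 4 * ((fun n : ℕ => g1 n) x - (fun n : ℕ => g1 n) 0) := by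
        rw [← Finset.mul_sum, Finset.sum_range_sub (fun n : ℕ => g1 n)]
    _ = 4 * (Real.sqrt x * Real.exp ((1/2)*Real.sqrt x)) := by
        simp [g1]


lemma sqrt_succ_le (x : ℝ) (hx : 0 ≤ x) : Real.sqrt (x+1) ≤ Real.sqrt x + 1 := by
  have h1 : x + 1 ≤ (Real.sqrt x + 1)^2 := by
    nlinarith [Real.sq_sqrt hx, Real.sqrt_nonneg x]
  calc Real.sqrt (x+1) ≤ Real.sqrt ((Real.sqrt x + 1)^2) := Real.sqrt_le_sqrt h1
    _ = Real.sqrt x + 1 := Real.sqrt_sq (by positivity)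

lemma half_le_exp_neg_half : (1/2 : ℝ) ≤ Real.exp (-(1/2) : ℝ) := by
  have h : Real.exp ((1/2):ℝ) ≤ 2 := by
    nlinarith [Real.exp_one_lt_d9, Real.exp_pos (1/2:ℝ), Real.exp_add (1/2:ℝ) (1/2:ℝ),
      Real.exp_pos 1]
  have h2 : Real.exp (-(1/2):ℝ) * Real.exp ((1/2):ℝ) = 1 := by
    rw [← Real.exp_add]; norm_num
  nlinarith [Real.exp_pos (-(1/2):ℝ), Real.exp_pos ((1/2):ℝ)]

/-- `g2 t = (t + 4√t + 8) exp(-√t/2)`. -/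
def g2 (t : ℝ) : ℝ := (t + 4*Real.sqrt t + 8) * Real.exp ((-(1/2)) * Real.sqrt t)

lemma g2_cont : Continuous g2 := by
  unfold g2; fun_prop

lemma g2_nonneg (t : ℝ) (ht : 0 ≤ t) : 0 ≤ g2 t := by
  have h1 := Real.sqrt_nonneg t
  have h2 := (Real.exp_pos ((-(1/2)) * Real.sqrt t)).le
  apply mul_nonneg _ h2
  nlinarith

lemma step2 (x : ℕ) :
    Real.sqrt x * Real.exp ((-(1/2)) * Real.sqrt x) ≤ 8 * (g2 x - g2 ((x:ℝ)+1)) := by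
  have hder : ∀ t ∈ Set.Ioo (x:ℝ) ((x:ℝ)+1), HasDerivAt g2
      ((fun t => (1 + 4*(1/(2*Real.sqrt t))) * Real.exp ((-(1/2))*Real.sqrt t)
        + (t + 4*Real.sqrt t + 8) * (Real.exp ((-(1/2))*Real.sqrt t)
            * ((-(1/2)) / (2*Real.sqrt t)))) t) t := by
    intro t ht
    have ht0 : 0 < t := lt_of_le_of_lt (Nat.cast_nonneg x) ht.1
    have h1 : HasDerivAt (fun s : ℝ => s + 4*Real.sqrt s + 8) (1 + 4*(1/(2*Real.sqrt t))) t :=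
      ((hasDerivAt_id t).add ((Real.hasDerivAt_sqrt (ne_of_gt ht0)).const_mul 4)).add_const 8
    exact h1.mul (hasDeriv_exp_sqrt (-(1/2)) t ht0)
  obtain ⟨c, hc, heq⟩ := mvt1 g2 _ x g2_cont hder
  have hc0 : (0:ℝ) < c := lt_of_le_of_lt (Nat.cast_nonneg x) hc.1
  have hsc : 0 < Real.sqrt c := Real.sqrt_pos.2 hc0
  have hs2 : Real.sqrt c ^ 2 = c := Real.sq_sqrt hc0.le
  -- the derivative equals -(√c/4)·exp(-√c/2)
  have hval : (1 + 4*(1/(2*Real.sqrt c))) * Real.exp ((-(1/2))*Real.sqrt c)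
        + (c + 4*Real.sqrt c + 8) * (Real.exp ((-(1/2))*Real.sqrt c)
            * ((-(1/2)) / (2*Real.sqrt c)))
      = -(Real.sqrt c / 4 * Real.exp ((-(1/2))*Real.sqrt c)) := by
    set E := Real.exp ((-(1/2)) * Real.sqrt c) with hE
    field_simp
    linear_combination (4 * E) * hs2
  have hdiff : g2 x - g2 ((x:ℝ)+1)
      = Real.sqrt c / 4 * Real.exp ((-(1/2))*Real.sqrt c) := by
    have := heq
    rw [hval] at this; linarith
  rw [hdiff]
  -- bound: √c ≥ √x, exp(-√c/2) ≥ exp(-√(x+1)/2) ≥ (1/2) exp(-√x/2)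
  have hxc : Real.sqrt x ≤ Real.sqrt c := Real.sqrt_le_sqrt hc.1.le
  have hcx1 : Real.sqrt c ≤ Real.sqrt ((x:ℝ)+1) := Real.sqrt_le_sqrt hc.2.le
  have hle : Real.sqrt ((x:ℝ)+1) ≤ Real.sqrt x + 1 := sqrt_succ_le _ (Nat.cast_nonneg x)
  have e1 : Real.exp ((-(1/2)) * (Real.sqrt x + 1)) ≤ Real.exp ((-(1/2))*Real.sqrt c) := by
    apply Real.exp_le_exp.2; nlinarith
  have e2 : Real.exp ((-(1/2)) * (Real.sqrt x + 1))
      = Real.exp (-(1/2):ℝ) * Real.exp ((-(1/2))*Real.sqrt x) := by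
    rw [← Real.exp_add]; ring_nf
  have e3 : (1/2:ℝ) * Real.exp ((-(1/2))*Real.sqrt x) ≤ Real.exp ((-(1/2))*Real.sqrt c) := by
    have := half_le_exp_neg_half
    have hp := Real.exp_pos ((-(1/2))*Real.sqrt x)
    nlinarith
  have hsx : (0:ℝ) ≤ Real.sqrt x := Real.sqrt_nonneg _
  have hp := Real.exp_pos ((-(1/2))*Real.sqrt c)
  nlinarith

/-- telescoping over `Ico` (decreasing form). -/
lemma sum_Ico_telescope (f : ℕ → ℝ) {a b : ℕ} (h : a ≤ b) :
    ∑ x ∈ Ico a b, (f x - f (x+1)) = f a - f b := by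
  rw [Finset.sum_Ico_eq_sum_range]
  have h2 := Finset.sum_range_sub' (fun i => f (a + i)) (b - a)
  calc ∑ i ∈ range (b-a), (f (a+i) - f (a+i+1))
      = ∑ i ∈ range (b-a), ((fun i => f (a+i)) i - (fun i => f (a+i)) (i+1)) := by
        apply Finset.sum_congr rfl; intro i _; simp [add_assoc]
    _ = f (a + 0) - f (a + (b-a)) := Finset.sum_range_sub' (fun i => f (a + i)) (b - a)
    _ = f a - f b := by rw [add_zero, Nat.add_sub_cancel' h]

/-- telescoping over `Ico` (increasing form). -/
lemma sum_Ico_telescope' (f : ℕ → ℝ) {a b : ℕ} (h : a ≤ b) :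
    ∑ x ∈ Ico a b, (f (x+1) - f x) = f b - f a := by
  rw [Finset.sum_Ico_eq_sum_range]
  calc ∑ i ∈ range (b-a), (f (a+i+1) - f (a+i))
      = ∑ i ∈ range (b-a), ((fun i => f (a+i)) (i+1) - (fun i => f (a+i)) i) := by
        apply Finset.sum_congr rfl; intro i _; simp [add_assoc]
    _ = f (a + (b-a)) - f (a + 0) := Finset.sum_range_sub (fun i => f (a + i)) (b - a)
    _ = f b - f a := by rw [add_zero, Nat.add_sub_cancel' h]

lemma sumB (u M : ℕ) :
    ∑ x ∈ Ico (u+1) (M+1), Real.sqrt x * Real.exp ((-(1/2)) * Real.sqrt x)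
      ≤ 104 * ((u:ℝ)+1) * Real.exp ((-(1/2)) * Real.sqrt u) := by
  rcases le_or_gt (u+1) (M+1) with hum | hum
  · have hstep : ∀ x ∈ Ico (u+1) (M+1),
        Real.sqrt x * Real.exp ((-(1/2)) * Real.sqrt x)
          ≤ 8 * ((fun n : ℕ => g2 n) x - (fun n : ℕ => g2 n) (x+1)) := by
      intro x _
      have := step2 x
      simpa [Nat.cast_add, Nat.cast_one] using this
    calc ∑ x ∈ Ico (u+1) (M+1), Real.sqrt x * Real.exp ((-(1/2)) * Real.sqrt x)
        ≤ ∑ x ∈ Ico (u+1) (M+1), 8 * ((fun n : ℕ => g2 n) x - (fun n : ℕ => g2 n) (x+1)) :=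
          Finset.sum_le_sum hstep
      _ = 8 * (g2 (u+1:ℕ) - g2 (M+1:ℕ)) := by
          rw [← Finset.mul_sum, sum_Ico_telescope (fun n : ℕ => g2 n) hum]
      _ ≤ 8 * g2 (u+1:ℕ) := by
          have := g2_nonneg ((M+1:ℕ):ℝ) (Nat.cast_nonneg _); linarith
      _ ≤ 104 * ((u:ℝ)+1) * Real.exp ((-(1/2)) * Real.sqrt u) := by
          have hcast : ((u+1:ℕ):ℝ) = (u:ℝ)+1 := by push_cast; ring
          rw [g2, hcast]
          have h1 : Real.sqrt ((u:ℝ)+1) ≤ (u:ℝ)+1 := by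
            have : ((u:ℝ)+1) ≤ ((u:ℝ)+1)^2 := by nlinarith [Nat.cast_nonneg (α := ℝ) u]
            calc Real.sqrt ((u:ℝ)+1) ≤ Real.sqrt (((u:ℝ)+1)^2) := Real.sqrt_le_sqrt this
              _ = (u:ℝ)+1 := Real.sqrt_sq (by positivity)
          have h2 : Real.exp ((-(1/2)) * Real.sqrt ((u:ℝ)+1))
              ≤ Real.exp ((-(1/2)) * Real.sqrt u) := by
            apply Real.exp_le_exp.2
            have : Real.sqrt (u:ℝ) ≤ Real.sqrt ((u:ℝ)+1) := Real.sqrt_le_sqrt (by linarith)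
            nlinarith
          have h3 : ((u:ℝ)+1) + 4*Real.sqrt ((u:ℝ)+1) + 8 ≤ 13 * ((u:ℝ)+1) := by
            have hu1 : (1:ℝ) ≤ (u:ℝ)+1 := by
              have : (0:ℝ) ≤ (u:ℝ) := Nat.cast_nonneg u
              linarith
            nlinarith
          have hny : 0 ≤ ((u:ℝ)+1) + 4*Real.sqrt ((u:ℝ)+1) + 8 := by
            have := Real.sqrt_nonneg ((u:ℝ)+1); positivity
          have hep := (Real.exp_pos ((-(1/2)) * Real.sqrt (u:ℝ))).le
          nlinarith [mul_le_mul h3 h2 (Real.exp_pos _).le (by positivity : (0:ℝ) ≤ 13*((u:ℝ)+1))]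
  · rw [Finset.Ico_eq_empty (by omega)]
    simp only [Finset.sum_empty]
    positivity


/-- `g3 t = exp(√t)` -/
def g3 (t : ℝ) : ℝ := Real.exp (Real.sqrt t)

lemma g3_cont : Continuous g3 := by unfold g3; fun_prop

lemma g3_deriv : ∀ (x : ℕ), ∀ t ∈ Set.Ioo (x:ℝ) ((x:ℝ)+1),
    HasDerivAt g3 ((fun t => Real.exp (Real.sqrt t) * (1/(2*Real.sqrt t))) t) t := by
  intro x t ht
  have ht0 : 0 < t := lt_of_le_of_lt (Nat.cast_nonneg x) ht.1
  exact (Real.hasDerivAt_sqrt (ne_of_gt ht0)).exp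

lemma step3a (x : ℕ) (hx : 1 ≤ x) :
    Real.exp (Real.sqrt x) / Real.sqrt x ≤ 4 * (g3 ((x:ℝ)+1) - g3 x) := by
  obtain ⟨c, hc, heq⟩ := mvt1 g3 _ x g3_cont (g3_deriv x)
  rw [heq]
  have hx1 : (1:ℝ) ≤ (x:ℝ) := by exact_mod_cast hx
  have hc0 : (0:ℝ) < c := by have := hc.1; linarith
  have hsc : 0 < Real.sqrt c := Real.sqrt_pos.2 hc0
  have hsx : 0 < Real.sqrt (x:ℝ) := Real.sqrt_pos.2 (by linarith)
  have hxc : Real.sqrt (x:ℝ) ≤ Real.sqrt c := Real.sqrt_le_sqrt hc.1.le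
  have hcx : Real.sqrt c ≤ Real.sqrt ((x:ℝ)+1) := Real.sqrt_le_sqrt hc.2.le
  have h2 : Real.sqrt ((x:ℝ)+1) ≤ 2 * Real.sqrt (x:ℝ) := by
    have h4 : ((x:ℝ)+1) ≤ 4 * (x:ℝ) := by linarith
    calc Real.sqrt ((x:ℝ)+1) ≤ Real.sqrt (4*(x:ℝ)) := Real.sqrt_le_sqrt h4
      _ = 2 * Real.sqrt (x:ℝ) := by
          rw [show (4:ℝ)*(x:ℝ) = 2^2 * (x:ℝ) by norm_num, Real.sqrt_mul (by positivity),
            Real.sqrt_sq (by norm_num : (0:ℝ) ≤ 2)]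
  have he : Real.exp (Real.sqrt (x:ℝ)) ≤ Real.exp (Real.sqrt c) := Real.exp_le_exp.2 hxc
  have hmain : Real.exp (Real.sqrt (x:ℝ)) * Real.sqrt c
      ≤ (2 * Real.exp (Real.sqrt c)) * Real.sqrt (x:ℝ) := by
    have t1 : Real.exp (Real.sqrt (x:ℝ)) * Real.sqrt c ≤ Real.exp (Real.sqrt c) * Real.sqrt c :=
      mul_le_mul_of_nonneg_right he hsc.le
    have t2 : Real.exp (Real.sqrt c) * Real.sqrt c
        ≤ Real.exp (Real.sqrt c) * (2 * Real.sqrt (x:ℝ)) :=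
      mul_le_mul_of_nonneg_left (by linarith) (Real.exp_pos _).le
    linarith
  calc Real.exp (Real.sqrt (x:ℝ)) / Real.sqrt (x:ℝ)
      ≤ (2 * Real.exp (Real.sqrt c)) / Real.sqrt c := (div_le_div_iff₀ hsx hsc).2 hmain
    _ = 4 * (Real.exp (Real.sqrt c) * (1/(2*Real.sqrt c))) := by field_simp; ring

lemma step3b (x : ℕ) (hx : 1 ≤ x) :
    g3 ((x:ℝ)+1) - g3 x ≤ Real.exp 1 * Real.exp (Real.sqrt x) * (1/(2*Real.sqrt x)) := by
  obtain ⟨c, hc, heq⟩ := mvt1 g3 _ x g3_cont (g3_deriv x)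
  rw [heq]
  have hx1 : (1:ℝ) ≤ (x:ℝ) := by exact_mod_cast hx
  have hc0 : (0:ℝ) < c := by have := hc.1; linarith
  have hsc : 0 < Real.sqrt c := Real.sqrt_pos.2 hc0
  have hsx : 0 < Real.sqrt (x:ℝ) := Real.sqrt_pos.2 (by linarith)
  have hxc : Real.sqrt (x:ℝ) ≤ Real.sqrt c := Real.sqrt_le_sqrt hc.1.le
  have hcx : Real.sqrt c ≤ Real.sqrt ((x:ℝ)+1) := Real.sqrt_le_sqrt hc.2.le
  have hle : Real.sqrt ((x:ℝ)+1) ≤ Real.sqrt (x:ℝ) + 1 := sqrt_succ_le _ (by positivity)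
  have he : Real.exp (Real.sqrt c) ≤ Real.exp 1 * Real.exp (Real.sqrt (x:ℝ)) := by
    rw [← Real.exp_add]
    apply Real.exp_le_exp.2; linarith
  apply mul_le_mul he _ (by positivity) (by positivity)
  rw [one_div, one_div]
  apply inv_anti₀ (by positivity)
  linarith

lemma sumC (M : ℕ) :
    ∑ x ∈ Ico 1 M, Real.exp (Real.sqrt x) / Real.sqrt x ≤ 4 * Real.exp (Real.sqrt M) := by
  rcases le_or_gt 1 M with hM | hM
  · have hstep : ∀ x ∈ Ico 1 M, Real.exp (Real.sqrt x) / Real.sqrt x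
        ≤ 4 * ((fun n : ℕ => g3 n) (x+1) - (fun n : ℕ => g3 n) x) := by
      intro x hx
      have hx1 : 1 ≤ x := (Finset.mem_Ico.1 hx).1
      have := step3a x hx1
      simpa [Nat.cast_add, Nat.cast_one] using this
    calc ∑ x ∈ Ico 1 M, Real.exp (Real.sqrt x) / Real.sqrt x
        ≤ ∑ x ∈ Ico 1 M, 4 * ((fun n : ℕ => g3 n) (x+1) - (fun n : ℕ => g3 n) x) :=
          Finset.sum_le_sum hstep
      _ = 4 * (g3 (M:ℕ) - g3 (1:ℕ)) := by
          rw [← Finset.mul_sum, sum_Ico_telescope' (fun n : ℕ => g3 n) hM]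
      _ ≤ 4 * Real.exp (Real.sqrt M) := by
          have : 0 < g3 ((1:ℕ):ℝ) := Real.exp_pos _
          unfold g3 at *; linarith
  · have hM0 : M = 0 := by omega
    subst hM0
    simp

/-- `g4 t = (2√t+2) exp(-√t)` -/
def g4 (t : ℝ) : ℝ := (2*Real.sqrt t + 2) * Real.exp (-Real.sqrt t)

lemma g4_cont : Continuous g4 := by unfold g4; fun_prop

lemma g4_nonneg (t : ℝ) : 0 ≤ g4 t := by
  have h1 := Real.sqrt_nonneg t
  have h2 := (Real.exp_pos (-Real.sqrt t)).le
  apply mul_nonneg _ h2; linarith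

lemma step4 (x : ℕ) :
    Real.exp (-Real.sqrt x) ≤ Real.exp 1 * (g4 x - g4 ((x:ℝ)+1)) := by
  have hder : ∀ t ∈ Set.Ioo (x:ℝ) ((x:ℝ)+1), HasDerivAt g4
      ((fun t => (2*(1/(2*Real.sqrt t))) * Real.exp (-Real.sqrt t)
        + (2*Real.sqrt t + 2) * (Real.exp (-Real.sqrt t) * (-(1/(2*Real.sqrt t))))) t) t := by
    intro t ht
    have ht0 : 0 < t := lt_of_le_of_lt (Nat.cast_nonneg x) ht.1
    have h1 : HasDerivAt (fun s : ℝ => 2*Real.sqrt s + 2) (2*(1/(2*Real.sqrt t))) t :=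
      ((Real.hasDerivAt_sqrt (ne_of_gt ht0)).const_mul 2).add_const 2
    have h2 : HasDerivAt (fun s : ℝ => Real.exp (-Real.sqrt s))
        (Real.exp (-Real.sqrt t) * (-(1/(2*Real.sqrt t)))) t :=
      ((Real.hasDerivAt_sqrt (ne_of_gt ht0)).neg).exp
    exact h1.mul h2
  obtain ⟨c, hc, heq⟩ := mvt1 g4 _ x g4_cont hder
  have hc0 : (0:ℝ) < c := lt_of_le_of_lt (Nat.cast_nonneg x) hc.1
  have hsc : 0 < Real.sqrt c := Real.sqrt_pos.2 hc0
  have hval : (2*(1/(2*Real.sqrt c))) * Real.exp (-Real.sqrt c)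
      + (2*Real.sqrt c + 2) * (Real.exp (-Real.sqrt c) * (-(1/(2*Real.sqrt c))))
      = -Real.exp (-Real.sqrt c) := by
    field_simp; ring
  have hdiff : g4 x - g4 ((x:ℝ)+1) = Real.exp (-Real.sqrt c) := by
    have := heq; rw [hval] at this; linarith
  rw [hdiff]
  have hcx : Real.sqrt c ≤ Real.sqrt ((x:ℝ)+1) := Real.sqrt_le_sqrt hc.2.le
  have hle : Real.sqrt ((x:ℝ)+1) ≤ Real.sqrt (x:ℝ) + 1 := sqrt_succ_le _ (Nat.cast_nonneg x)
  have : Real.exp (-(Real.sqrt (x:ℝ) + 1)) ≤ Real.exp (-Real.sqrt c) :=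
    Real.exp_le_exp.2 (by linarith)
  have h3 : Real.exp 1 * Real.exp (-(Real.sqrt (x:ℝ) + 1)) = Real.exp (-Real.sqrt (x:ℝ)) := by
    rw [← Real.exp_add]; ring_nf
  calc Real.exp (-Real.sqrt (x:ℝ)) = Real.exp 1 * Real.exp (-(Real.sqrt (x:ℝ) + 1)) := h3.symm
    _ ≤ Real.exp 1 * Real.exp (-Real.sqrt c) := by
        apply mul_le_mul_of_nonneg_left this (Real.exp_pos 1).le

lemma sumD (M : ℕ) : ∑ x ∈ Ico 1 (M+1), Real.exp (-Real.sqrt x) ≤ 4 := by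
  have hstep : ∀ x ∈ Ico 1 (M+1), Real.exp (-Real.sqrt x)
      ≤ Real.exp 1 * ((fun n : ℕ => g4 n) x - (fun n : ℕ => g4 n) (x+1)) := by
    intro x _
    have := step4 x
    simpa [Nat.cast_add, Nat.cast_one] using this
  calc ∑ x ∈ Ico 1 (M+1), Real.exp (-Real.sqrt x)
      ≤ ∑ x ∈ Ico 1 (M+1), Real.exp 1 * ((fun n : ℕ => g4 n) x - (fun n : ℕ => g4 n) (x+1)) :=
        Finset.sum_le_sum hstep
    _ = Real.exp 1 * (g4 (1:ℕ) - g4 (M+1:ℕ)) := by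
        rw [← Finset.mul_sum, sum_Ico_telescope (fun n : ℕ => g4 n) (by omega)]
    _ ≤ Real.exp 1 * g4 (1:ℕ) := by
        have := g4_nonneg ((M+1:ℕ):ℝ)
        nlinarith [(Real.exp_pos 1).le]
    _ = 4 := by
        have : g4 ((1:ℕ):ℝ) = 4 * Real.exp (-1) := by
          rw [g4]; norm_num
        rw [this, ← mul_assoc]
        rw [mul_comm (Real.exp 1) 4, mul_assoc, ← Real.exp_add]
        norm_num

/-- summation by parts / order swap -/
lemma swap_sum (M : ℕ) (a b : ℕ → ℝ) :
    ∑ x ∈ range (M+1), a x * ∑ u ∈ range x, b u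
      = ∑ u ∈ range M, (b u * ∑ x ∈ Ico (u+1) (M+1), a x) := by
  have h1 : ∀ x ∈ range (M+1), a x * ∑ u ∈ range x, b u
      = ∑ u ∈ range (M+1), (if u < x then a x * b u else 0) := by
    intro x hx
    have hfil : (range (M+1)).filter (fun u => u < x) = range x := by
      ext u
      simp only [Finset.mem_filter, Finset.mem_range]
      have := Finset.mem_range.1 hx
      omega
    rw [← Finset.sum_filter, hfil, Finset.mul_sum]
  rw [Finset.sum_congr rfl h1, Finset.sum_comm]
  have h2 : ∀ u ∈ range (M+1), ∑ x ∈ range (M+1), (if u < x then a x * b u else 0)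
      = b u * ∑ x ∈ Ico (u+1) (M+1), a x := by
    intro u _
    have hfil : (range (M+1)).filter (fun x => u < x) = Ico (u+1) (M+1) := by
      ext x
      simp only [Finset.mem_filter, Finset.mem_range, Finset.mem_Ico]
      omega
    rw [← Finset.sum_filter, hfil, Finset.mul_sum]
    exact Finset.sum_congr rfl fun x _ => mul_comm _ _
  rw [Finset.sum_congr rfl h2, Finset.sum_range_succ]
  simp

lemma one_le_Ztoy (N : ℕ) : 1 ≤ Ztoy 2 N := by
  rw [Ztoy_eq]
  have h0 : (0:ℕ) ∈ Finset.range (N^2+1) := by simp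
  have := Finset.single_le_sum (f := fun x : ℕ => Real.exp (-Real.sqrt x))
    (fun i _ => (Real.exp_pos _).le) h0
  simpa using this

lemma Ztoy_pos (N : ℕ) : 0 < Ztoy 2 N := lt_of_lt_of_le one_pos (one_le_Ztoy N)

lemma Ztoy_le_five (N : ℕ) : Ztoy 2 N ≤ 5 := by
  rw [Ztoy_eq, Finset.range_eq_Ico, Finset.sum_eq_sum_Ico_succ_bot (by omega : 0 < N^2+1)]
  have h0 : Real.exp (-Real.sqrt (0:ℕ)) = 1 := by simp
  rw [h0]
  have := sumD (N^2)
  linarith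

lemma sum_mu_one (N : ℕ) : ∑ x ∈ Finset.range (N^2+1), muToy 2 N x = 1 := by
  have : ∀ x ∈ Finset.range (N^2+1), muToy 2 N x = Real.exp (-Real.sqrt x) / Ztoy 2 N :=
    fun x _ => mu_eq N x
  rw [Finset.sum_congr rfl this, ← Finset.sum_div, ← Ztoy_eq,
    div_self (ne_of_gt (Ztoy_pos N))]

lemma mu_nonneg (N x : ℕ) : 0 ≤ muToy 2 N x := by
  rw [mu_eq]
  exact div_nonneg (Real.exp_pos _).le (Ztoy_pos N).le

lemma var_nonneg (N : ℕ) (f : ℕ → ℝ) : 0 ≤ varToy 2 N f :=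
  Finset.sum_nonneg fun x _ => mul_nonneg (mu_nonneg N x) (sq_nonneg _)

lemma dir_nonneg (N : ℕ) (f : ℕ → ℝ) : 0 ≤ dirToy 2 N f := by
  apply Finset.sum_nonneg
  intro x _
  apply mul_nonneg (mul_nonneg (mu_nonneg N x) _) (sq_nonneg _)
  rw [b_eq]
  exact Real.sqrt_nonneg _

lemma var_le_sq_dev (N : ℕ) (f : ℕ → ℝ) (a : ℝ) :
    varToy 2 N f ≤ ∑ x ∈ Finset.range (N^2+1), muToy 2 N x * (f x - a)^2 := by
  have hsum1 := sum_mu_one N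
  have hexp : ∀ b : ℝ, ∑ x ∈ Finset.range (N^2+1), muToy 2 N x * (f x - b)^2
      = (∑ x ∈ Finset.range (N^2+1), muToy 2 N x * f x ^ 2)
          - 2*b*(meanToy 2 N f) + b^2 := by
    intro b
    have hterm : ∀ x ∈ Finset.range (N^2+1), muToy 2 N x * (f x - b)^2
        = muToy 2 N x * f x^2 - 2*b*(muToy 2 N x * f x) + b^2 * muToy 2 N x :=
      fun x _ => by ring
    rw [Finset.sum_congr rfl hterm, Finset.sum_add_distrib, Finset.sum_sub_distrib,
      ← Finset.mul_sum, ← Finset.mul_sum, hsum1]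
    rw [meanToy]
    ring
  have h1 := hexp a
  have h2 := hexp (meanToy 2 N f)
  have hvar : varToy 2 N f = ∑ x ∈ Finset.range (N^2+1),
      muToy 2 N x * (f x - meanToy 2 N f)^2 := rfl
  rw [hvar, h2, h1]
  nlinarith [sq_nonneg (meanToy 2 N f - a)]








lemma key_u (N u : ℕ) (hN : 1 ≤ N) (hu : u < N^2) :
    ((u:ℝ)+1) ≤ 2*(N:ℝ)*Real.sqrt ((max u 1 : ℕ):ℝ) := by
  rcases Nat.eq_zero_or_pos u with hu0 | hu1
  · subst hu0
    simp only [Nat.cast_zero, zero_add]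
    have : ((max 0 1 : ℕ):ℝ) = 1 := by norm_num
    rw [this, Real.sqrt_one, mul_one]
    have : (1:ℝ) ≤ (N:ℝ) := by exact_mod_cast hN
    linarith
  · have hmax : (max u 1) = u := by omega
    rw [hmax]
    have hu1' : (1:ℝ) ≤ (u:ℝ) := by exact_mod_cast hu1
    have h1 : (1:ℝ) ≤ Real.sqrt u := by
      rw [show (1:ℝ) = Real.sqrt 1 by simp]
      exact Real.sqrt_le_sqrt hu1'
    have h2 : Real.sqrt u ≤ (N:ℝ) := by
      have hcast : (u:ℝ) ≤ ((N:ℝ))^2 := by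
        have : (u:ℝ) ≤ ((N^2 : ℕ):ℝ) := by exact_mod_cast hu.le
        simpa [Nat.cast_pow] using this
      calc Real.sqrt u ≤ Real.sqrt ((N:ℝ)^2) := Real.sqrt_le_sqrt hcast
        _ = (N:ℝ) := Real.sqrt_sq (Nat.cast_nonneg N)
    have h3 : Real.sqrt u * Real.sqrt u = (u:ℝ) := Real.mul_self_sqrt (by positivity)
    nlinarith

theorem poincare (N : ℕ) (hN : 1 ≤ N) (f : ℕ → ℝ) :
    varToy 2 N f ≤ 832 * (N:ℝ) * dirToy 2 N f := by
  have hZ1 : 1 ≤ Ztoy 2 N := one_le_Ztoy N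
  have hZ : 0 < Ztoy 2 N := Ztoy_pos N
  set c : ℕ → ℝ := fun u => Real.exp ((1/2) * Real.sqrt u) with hc
  have hcpos : ∀ u, 0 < c u := fun u => Real.exp_pos _
  -- Step 1 : variance is at most the mean square deviation from `f 0`
  have step1 : varToy 2 N f ≤ ∑ x ∈ range (N^2+1), muToy 2 N x * (f x - f 0)^2 :=
    var_le_sq_dev N f (f 0)
  -- Step 2 : pointwise weighted Cauchy–Schwarz along paths
  have stepCS : ∀ x : ℕ, (f x - f 0)^2
      ≤ (∑ u ∈ range x, c u) * ∑ u ∈ range x, (f (u+1) - f u)^2 / c u := by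
    intro x
    have htel : ∑ u ∈ range x, (f (u+1) - f u) = f x - f 0 := Finset.sum_range_sub f x
    have hCS := Finset.sum_mul_sq_le_sq_mul_sq (range x)
      (fun u => Real.sqrt (c u)) (fun u => (f (u+1) - f u) / Real.sqrt (c u))
    have h1 : ∀ u ∈ range x,
        Real.sqrt (c u) * ((f (u+1) - f u) / Real.sqrt (c u)) = f (u+1) - f u := by
      intro u _
      have := Real.sqrt_pos.2 (hcpos u)
      field_simp
    have h2 : ∀ u ∈ range x, (Real.sqrt (c u))^2 = c u := fun u _ => Real.sq_sqrt (hcpos u).le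
    have h3 : ∀ u ∈ range x,
        ((f (u+1) - f u) / Real.sqrt (c u))^2 = (f (u+1) - f u)^2 / c u := by
      intro u _
      rw [div_pow, Real.sq_sqrt (hcpos u).le]
    rw [Finset.sum_congr rfl h1, Finset.sum_congr rfl h2, Finset.sum_congr rfl h3, htel] at hCS
    exact hCS
  -- Step 3 : plug in and swap summation order
  have step3 : ∑ x ∈ range (N^2+1), muToy 2 N x * (f x - f 0)^2
      ≤ ∑ x ∈ range (N^2+1),
          (muToy 2 N x * ∑ u ∈ range x, c u) * (∑ u ∈ range x, (f (u+1) - f u)^2 / c u) := by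
    apply Finset.sum_le_sum
    intro x _
    calc muToy 2 N x * (f x - f 0)^2
        ≤ muToy 2 N x * ((∑ u ∈ range x, c u) * ∑ u ∈ range x, (f (u+1) - f u)^2 / c u) :=
          mul_le_mul_of_nonneg_left (stepCS x) (mu_nonneg N x)
      _ = (muToy 2 N x * ∑ u ∈ range x, c u) * (∑ u ∈ range x, (f (u+1) - f u)^2 / c u) := by
          ring
  have hswap : ∑ x ∈ range (N^2+1),
        ((muToy 2 N x * ∑ u ∈ range x, c u) * ∑ u ∈ range x, (f (u+1) - f u)^2 / c u)
      = ∑ u ∈ range (N^2),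
          (((f (u+1) - f u)^2 / c u) *
            ∑ x ∈ Ico (u+1) (N^2+1), muToy 2 N x * ∑ v ∈ range x, c v) := by
    have := swap_sum (N^2) (fun x => muToy 2 N x * ∑ v ∈ range x, c v)
      (fun u => (f (u+1) - f u)^2 / c u)
    exact this
  -- Step 4 : the weight bound
  have step4 : ∀ u ∈ range (N^2),
      ((f (u+1) - f u)^2 / c u) *
          (∑ x ∈ Ico (u+1) (N^2+1), muToy 2 N x * ∑ v ∈ range x, c v)
        ≤ 832 * (N:ℝ) * (muToy 2 N u * bToy 2 u * (f (u+1) - f u)^2) := by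
    intro u hu
    have hu' : u < N^2 := Finset.mem_range.1 hu
    -- (a) pointwise bound on μ x · G x
    have ha : ∀ x ∈ Ico (u+1) (N^2+1), muToy 2 N x * ∑ v ∈ range x, c v
        ≤ (4 / Ztoy 2 N) * (Real.sqrt x * Real.exp ((-(1/2)) * Real.sqrt x)) := by
      intro x _
      have hGx := sumA x
      have hmu : muToy 2 N x = Real.exp (-Real.sqrt x) / Ztoy 2 N := mu_eq N x
      have hmupos : 0 ≤ muToy 2 N x := mu_nonneg N x
      calc muToy 2 N x * ∑ v ∈ range x, c v
          ≤ muToy 2 N x * (4 * (Real.sqrt x * Real.exp ((1/2) * Real.sqrt x))) :=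
            mul_le_mul_of_nonneg_left hGx hmupos
        _ = (4 / Ztoy 2 N) * (Real.sqrt x *
              (Real.exp (-Real.sqrt x) * Real.exp ((1/2) * Real.sqrt x))) := by
            rw [hmu]; ring
        _ = (4 / Ztoy 2 N) * (Real.sqrt x * Real.exp ((-(1/2)) * Real.sqrt x)) := by
            rw [← Real.exp_add]; ring_nf
    -- (b) sum the bound
    have hb : ∑ x ∈ Ico (u+1) (N^2+1), muToy 2 N x * ∑ v ∈ range x, c v
        ≤ (4 / Ztoy 2 N) * (104 * ((u:ℝ)+1) * Real.exp ((-(1/2)) * Real.sqrt u)) := by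
      calc ∑ x ∈ Ico (u+1) (N^2+1), muToy 2 N x * ∑ v ∈ range x, c v
          ≤ ∑ x ∈ Ico (u+1) (N^2+1),
              (4 / Ztoy 2 N) * (Real.sqrt x * Real.exp ((-(1/2)) * Real.sqrt x)) :=
            Finset.sum_le_sum ha
        _ = (4 / Ztoy 2 N) * ∑ x ∈ Ico (u+1) (N^2+1),
              Real.sqrt x * Real.exp ((-(1/2)) * Real.sqrt x) := by
            rw [Finset.mul_sum]
        _ ≤ (4 / Ztoy 2 N) * (104 * ((u:ℝ)+1) * Real.exp ((-(1/2)) * Real.sqrt u)) := by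
            apply mul_le_mul_of_nonneg_left (sumB u (N^2)) (by positivity)
    -- (c) compare to the Dirichlet weight
    have hc2 : (4 / Ztoy 2 N) * (104 * ((u:ℝ)+1) * Real.exp ((-(1/2)) * Real.sqrt u))
        ≤ 832 * (N:ℝ) * (c u * (muToy 2 N u * bToy 2 u)) := by
      have hkey := key_u N u hN hu'
      have hmu : muToy 2 N u = Real.exp (-Real.sqrt u) / Ztoy 2 N := mu_eq N u
      have hbu : bToy 2 u = Real.sqrt ((max u 1 : ℕ):ℝ) := b_eq u
      have hcomb : c u * Real.exp (-Real.sqrt u) = Real.exp ((-(1/2)) * Real.sqrt u) := by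
        rw [hc, ← Real.exp_add]; ring_nf
      rw [hmu, hbu]
      have hrw : 832 * (N:ℝ) * (c u * (Real.exp (-Real.sqrt u) / Ztoy 2 N
            * Real.sqrt ((max u 1 : ℕ):ℝ)))
          = (416 / Ztoy 2 N) * Real.exp ((-(1/2)) * Real.sqrt u)
              * (2 * (N:ℝ) * Real.sqrt ((max u 1 : ℕ):ℝ)) := by
        rw [← hcomb]; ring
      rw [hrw]
      have hE := (Real.exp_pos ((-(1/2)) * Real.sqrt u)).le
      have h416 : (0:ℝ) ≤ 416 / Ztoy 2 N := by positivity
      calc (4 / Ztoy 2 N) * (104 * ((u:ℝ)+1) * Real.exp ((-(1/2)) * Real.sqrt u))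
          = (416 / Ztoy 2 N) * Real.exp ((-(1/2)) * Real.sqrt u) * ((u:ℝ)+1) := by ring
        _ ≤ (416 / Ztoy 2 N) * Real.exp ((-(1/2)) * Real.sqrt u)
              * (2 * (N:ℝ) * Real.sqrt ((max u 1 : ℕ):ℝ)) := by
            apply mul_le_mul_of_nonneg_left hkey (by positivity)
    -- combine
    have hT : ∑ x ∈ Ico (u+1) (N^2+1), muToy 2 N x * ∑ v ∈ range x, c v
        ≤ 832 * (N:ℝ) * (c u * (muToy 2 N u * bToy 2 u)) := le_trans hb hc2
    have hnn : 0 ≤ (f (u+1) - f u)^2 / c u := by positivity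
    calc ((f (u+1) - f u)^2 / c u) *
          (∑ x ∈ Ico (u+1) (N^2+1), muToy 2 N x * ∑ v ∈ range x, c v)
        ≤ ((f (u+1) - f u)^2 / c u) * (832 * (N:ℝ) * (c u * (muToy 2 N u * bToy 2 u))) :=
          mul_le_mul_of_nonneg_left hT hnn
      _ = 832 * (N:ℝ) * (muToy 2 N u * bToy 2 u * ((f (u+1) - f u)^2 / c u * c u)) := by
          ring
      _ = 832 * (N:ℝ) * (muToy 2 N u * bToy 2 u * (f (u+1) - f u)^2) := by
          rw [div_mul_cancel₀ _ (ne_of_gt (hcpos u))]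
  calc varToy 2 N f
      ≤ ∑ x ∈ range (N^2+1), muToy 2 N x * (f x - f 0)^2 := step1
    _ ≤ ∑ x ∈ range (N^2+1),
          (muToy 2 N x * ∑ u ∈ range x, c u) * (∑ u ∈ range x, (f (u+1) - f u)^2 / c u) := step3
    _ = ∑ u ∈ range (N^2),
          (((f (u+1) - f u)^2 / c u) *
            ∑ x ∈ Ico (u+1) (N^2+1), muToy 2 N x * ∑ v ∈ range x, c v) := hswap
    _ ≤ ∑ u ∈ range (N^2), 832 * (N:ℝ) * (muToy 2 N u * bToy 2 u * (f (u+1) - f u)^2) :=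
        Finset.sum_le_sum step4
    _ = 832 * (N:ℝ) * dirToy 2 N f := by
        rw [dirToy, Finset.mul_sum]


/-- The test function `x ↦ exp(√x)` realizing the order-`N` lower bound. -/
def ftest : ℕ → ℝ := fun x => Real.exp (Real.sqrt x)

lemma dir_test (N : ℕ) (hN : 1 ≤ N) :
    dirToy 2 N ftest ≤ 11 * Real.exp (N:ℝ) / Ztoy 2 N := by
  have hZ : 0 < Ztoy 2 N := Ztoy_pos N
  have hN2 : 0 < N^2 := by positivity
  rw [dirToy, Finset.range_eq_Ico, Finset.sum_eq_sum_Ico_succ_bot hN2]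
  have h0 : muToy 2 N 0 * bToy 2 0 * (ftest (0+1) - ftest 0)^2 ≤ 3 / Ztoy 2 N := by
    have hmu : muToy 2 N 0 = 1 / Ztoy 2 N := by rw [mu_eq]; norm_num
    have hb : bToy 2 0 = 1 := by rw [b_eq]; norm_num
    have hf1 : ftest (0+1) = Real.exp 1 := by norm_num [ftest]
    have hf0 : ftest 0 = 1 := by norm_num [ftest]
    have h3 : (Real.exp 1 - 1)^2 ≤ 3 := by
      nlinarith [Real.exp_one_lt_d9, Real.exp_one_gt_d9]
    rw [hmu, hb, hf1, hf0]
    calc 1 / Ztoy 2 N * 1 * (Real.exp 1 - 1)^2 = (Real.exp 1 - 1)^2 / Ztoy 2 N := by ring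
      _ ≤ 3 / Ztoy 2 N := (div_le_div_iff_of_pos_right hZ).2 h3
  have hmain : ∑ x ∈ Ico (0+1) (N^2), muToy 2 N x * bToy 2 x * (ftest (x+1) - ftest x)^2
      ≤ Real.exp 2 * Real.exp (N:ℝ) / Ztoy 2 N := by
    have hptw : ∀ x ∈ Ico (0+1) (N^2), muToy 2 N x * bToy 2 x * (ftest (x+1) - ftest x)^2
        ≤ (Real.exp 2 / (4 * Ztoy 2 N)) * (Real.exp (Real.sqrt x) / Real.sqrt x) := by
      intro x hx
      have hx1 : 1 ≤ x := (Finset.mem_Ico.1 hx).1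
      have hx1' : (1:ℝ) ≤ (x:ℝ) := by exact_mod_cast hx1
      have hsx : 0 < Real.sqrt (x:ℝ) := Real.sqrt_pos.2 (by linarith)
      have hmu : muToy 2 N x = Real.exp (-Real.sqrt x) / Ztoy 2 N := mu_eq N x
      have hbx : bToy 2 x = Real.sqrt (x:ℝ) := by
        rw [b_eq]
        congr 1
        have : max x 1 = x := by omega
        rw [this]
      have hcast : ((x+1:ℕ):ℝ) = (x:ℝ)+1 := by push_cast; ring
      have hdel0 : 0 ≤ ftest (x+1) - ftest x := by
        have : Real.sqrt (x:ℝ) ≤ Real.sqrt ((x+1:ℕ):ℝ) := by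
          apply Real.sqrt_le_sqrt; rw [hcast]; linarith
        have := Real.exp_le_exp.2 this
        simpa [ftest] using this
      have hdel : ftest (x+1) - ftest x
          ≤ Real.exp 1 * Real.exp (Real.sqrt x) * (1/(2*Real.sqrt x)) := by
        have h := step3b x hx1
        unfold g3 at h
        unfold ftest
        rw [hcast]
        exact h
      have hsq : (ftest (x+1) - ftest x)^2
          ≤ (Real.exp 1 * Real.exp (Real.sqrt x) * (1/(2*Real.sqrt x)))^2 :=
        pow_le_pow_left₀ hdel0 hdel 2
      have hmub : 0 ≤ muToy 2 N x * bToy 2 x := by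
        apply mul_nonneg (mu_nonneg N x)
        rw [hbx]; exact Real.sqrt_nonneg _
      calc muToy 2 N x * bToy 2 x * (ftest (x+1) - ftest x)^2
          ≤ muToy 2 N x * bToy 2 x
              * (Real.exp 1 * Real.exp (Real.sqrt x) * (1/(2*Real.sqrt x)))^2 :=
            mul_le_mul_of_nonneg_left hsq hmub
        _ = (Real.exp 2 / (4 * Ztoy 2 N)) * (Real.exp (Real.sqrt x) / Real.sqrt x) := by
            have h12 : Real.exp 1 * Real.exp 1 = Real.exp 2 := by
              rw [← Real.exp_add]; norm_num
            rw [hmu, hbx, Real.exp_neg]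
            field_simp
            linear_combination (4) * h12
    calc ∑ x ∈ Ico (0+1) (N^2), muToy 2 N x * bToy 2 x * (ftest (x+1) - ftest x)^2
        ≤ ∑ x ∈ Ico (0+1) (N^2),
            (Real.exp 2 / (4 * Ztoy 2 N)) * (Real.exp (Real.sqrt x) / Real.sqrt x) :=
          Finset.sum_le_sum hptw
      _ = (Real.exp 2 / (4 * Ztoy 2 N))
            * ∑ x ∈ Ico 1 (N^2), Real.exp (Real.sqrt x) / Real.sqrt x := by
          rw [Finset.mul_sum]
      _ ≤ (Real.exp 2 / (4 * Ztoy 2 N)) * (4 * Real.exp (Real.sqrt ((N^2:ℕ):ℝ))) := by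
          apply mul_le_mul_of_nonneg_left (sumC (N^2)) (by positivity)
      _ = Real.exp 2 * Real.exp (N:ℝ) / Ztoy 2 N := by
          have : Real.sqrt ((N^2:ℕ):ℝ) = (N:ℝ) := by
            have h : ((N^2:ℕ):ℝ) = (N:ℝ)^2 := by push_cast; ring
            rw [h, Real.sqrt_sq (Nat.cast_nonneg N)]
          rw [this]; ring
  have h12 : Real.exp 1 * Real.exp 1 = Real.exp 2 := by rw [← Real.exp_add]; norm_num
  have hee : Real.exp 2 < 8 := by nlinarith [Real.exp_one_lt_d9, Real.exp_one_gt_d9, h12]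
  have hNe : (1:ℝ) ≤ Real.exp (N:ℝ) := Real.one_le_exp (Nat.cast_nonneg N)
  have hfin : 3 + Real.exp 2 * Real.exp (N:ℝ) ≤ 11 * Real.exp (N:ℝ) := by nlinarith
  have := add_le_add h0 hmain
  calc muToy 2 N 0 * bToy 2 0 * (ftest (0+1) - ftest 0)^2
        + ∑ x ∈ Ico (0+1) (N^2), muToy 2 N x * bToy 2 x * (ftest (x+1) - ftest x)^2
      ≤ 3 / Ztoy 2 N + Real.exp 2 * Real.exp (N:ℝ) / Ztoy 2 N := this
    _ = (3 + Real.exp 2 * Real.exp (N:ℝ)) / Ztoy 2 N := by ring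
    _ ≤ 11 * Real.exp (N:ℝ) / Ztoy 2 N := (div_le_div_iff_of_pos_right hZ).2 hfin

lemma arith1 (S A B C V Z : ℝ) (h1 : S ≤ 2*A + 2*B*C) (h2 : A ≤ V) (h3 : C ≤ 1)
    (h4 : B ≤ Z*V) (h5 : Z ≤ 5) (h6 : 0 ≤ V) (h7 : 0 ≤ B) (h8 : 0 ≤ C) : S ≤ 12*V := by
  nlinarith

lemma arith2 (n E E2 Z V : ℝ) (hZ : 0 < Z) (he : 0 < E2)
    (h : n*(E/(4*E2*Z)) ≤ 12*V) : n*E/(48*E2*Z) ≤ V := by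
  have h48 : n*E/(48*E2*Z) = (n*(E/(4*E2*Z)))/12 := by
    field_simp
    ring
  rw [h48]
  linarith

lemma var_test (N : ℕ) (hN : 1 ≤ N) :
    (N:ℝ) * Real.exp (N:ℝ) / (48 * Real.exp 2 * Ztoy 2 N) ≤ varToy 2 N ftest := by
  have hZ : 0 < Ztoy 2 N := Ztoy_pos N
  have hZ5 : Ztoy 2 N ≤ 5 := Ztoy_le_five N
  have hN2 : N ≤ N^2 := Nat.le_self_pow (by norm_num) N
  have hcard : (Ico (N^2+1-N) (N^2+1)).card = N := by rw [Nat.card_Ico]; omega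
  have hSsub : Ico (N^2+1-N) (N^2+1) ⊆ range (N^2+1) := by
    intro y hy; rw [Finset.mem_range]; exact (Finset.mem_Ico.1 hy).2
  -- each term over the boundary window is large
  have hterm : ∀ y ∈ Ico (N^2+1-N) (N^2+1),
      Real.exp (N:ℝ) / (4 * Real.exp 2 * Ztoy 2 N) ≤ muToy 2 N y * (ftest y - 1)^2 := by
    intro y hy
    obtain ⟨hy1, hy2⟩ := Finset.mem_Ico.1 hy
    have hyN : (y:ℝ) ≤ (N:ℝ)^2 := by
      have h : y ≤ N^2 := by omega
      have := (Nat.cast_le (α := ℝ)).2 h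
      calc (y:ℝ) ≤ ((N^2:ℕ):ℝ) := this
        _ = (N:ℝ)^2 := by push_cast; ring
    have hsyN : Real.sqrt y ≤ (N:ℝ) := by
      calc Real.sqrt y ≤ Real.sqrt ((N:ℝ)^2) := Real.sqrt_le_sqrt hyN
        _ = N := Real.sqrt_sq (Nat.cast_nonneg N)
    have hN1 : (1:ℝ) ≤ (N:ℝ) := by exact_mod_cast hN
    have hylb : ((N:ℝ)-1)^2 ≤ (y:ℝ) := by
      have h1 : ((N^2+1-N : ℕ):ℝ) ≤ (y:ℝ) := (Nat.cast_le (α := ℝ)).2 hy1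
      have h2 : ((N^2+1-N : ℕ):ℝ) = (N:ℝ)^2+1-(N:ℝ) := by
        rw [Nat.cast_sub (by omega)]
        push_cast; ring
      rw [h2] at h1
      nlinarith
    have hsy1 : (N:ℝ)-1 ≤ Real.sqrt y := by
      calc (N:ℝ)-1 = Real.sqrt (((N:ℝ)-1)^2) := (Real.sqrt_sq (by linarith)).symm
        _ ≤ Real.sqrt y := Real.sqrt_le_sqrt hylb
    have hy1' : (1:ℝ) ≤ (y:ℝ) := by
      have : 1 ≤ y := by omega
      exact_mod_cast this
    have hsyone : (1:ℝ) ≤ Real.sqrt y := by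
      calc (1:ℝ) = Real.sqrt 1 := Real.sqrt_one.symm
        _ ≤ Real.sqrt y := Real.sqrt_le_sqrt hy1'
    have hA2 : (2:ℝ) ≤ Real.exp (Real.sqrt y) := by
      have h1 : Real.exp 1 ≤ Real.exp (Real.sqrt y) := Real.exp_le_exp.2 hsyone
      nlinarith [Real.exp_one_gt_d9]
    have hA1 : Real.exp ((N:ℝ)-1) ≤ Real.exp (Real.sqrt y) := Real.exp_le_exp.2 hsy1
    have hAm1 : Real.exp ((N:ℝ)-1)/2 ≤ Real.exp (Real.sqrt y) - 1 := by linarith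
    have hmuy : Real.exp (-(N:ℝ))/Ztoy 2 N ≤ muToy 2 N y := by
      rw [mu_eq]
      apply (div_le_div_iff_of_pos_right hZ).2
      exact Real.exp_le_exp.2 (by linarith)
    have hf : ftest y = Real.exp (Real.sqrt y) := rfl
    have hsq : (Real.exp ((N:ℝ)-1)/2)^2 ≤ (ftest y - 1)^2 := by
      rw [hf]
      apply pow_le_pow_left₀ (by positivity) hAm1
    have hprod : (Real.exp (-(N:ℝ))/Ztoy 2 N) * (Real.exp ((N:ℝ)-1)/2)^2
        ≤ muToy 2 N y * (ftest y - 1)^2 := by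
      apply mul_le_mul hmuy hsq (by positivity) (mu_nonneg N y)
    have hid : (Real.exp (-(N:ℝ))/Ztoy 2 N) * (Real.exp ((N:ℝ)-1)/2)^2
        = Real.exp (N:ℝ) / (4 * Real.exp 2 * Ztoy 2 N) := by
      have hexp : Real.exp (-(N:ℝ)) * Real.exp ((N:ℝ)-1) * Real.exp ((N:ℝ)-1) * Real.exp 2
          = Real.exp (N:ℝ) := by
        rw [← Real.exp_add, ← Real.exp_add, ← Real.exp_add]
        congr 1; ring
      have hZne : Ztoy 2 N ≠ 0 := ne_of_gt hZ
      field_simp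
      nlinarith [hexp, Real.exp_pos (-(N:ℝ)), Real.exp_pos ((N:ℝ)-1), Real.exp_pos (2:ℝ),
        Real.exp_pos ((N:ℝ))]
    rw [← hid]
    exact hprod
  -- sum over the window
  have hsum_S : (N:ℝ) * (Real.exp (N:ℝ)/(4*Real.exp 2*Ztoy 2 N))
      ≤ ∑ y ∈ Ico (N^2+1-N) (N^2+1), muToy 2 N y * (ftest y - 1)^2 := by
    have h := Finset.card_nsmul_le_sum (Ico (N^2+1-N) (N^2+1))
      (fun y => muToy 2 N y * (ftest y - 1)^2)
      (Real.exp (N:ℝ) / (4 * Real.exp 2 * Ztoy 2 N)) hterm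
    rw [hcard, nsmul_eq_mul] at h
    exact h
  -- compare the window sum with the variance
  have hvar0 : 0 ≤ varToy 2 N ftest := var_nonneg N ftest
  have hvar_eq : varToy 2 N ftest
      = ∑ x ∈ range (N^2+1), muToy 2 N x * (ftest x - meanToy 2 N ftest)^2 := rfl
  have h1m : (1 - meanToy 2 N ftest)^2 ≤ Ztoy 2 N * varToy 2 N ftest := by
    have h0mem : (0:ℕ) ∈ range (N^2+1) := by simp
    have hsingle : muToy 2 N 0 * (ftest 0 - meanToy 2 N ftest)^2 ≤ varToy 2 N ftest := by
      rw [hvar_eq]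
      exact Finset.single_le_sum
        (f := fun x => muToy 2 N x * (ftest x - meanToy 2 N ftest)^2)
        (fun i _ => mul_nonneg (mu_nonneg N i) (sq_nonneg _)) h0mem
    have hmu0 : muToy 2 N 0 = 1/Ztoy 2 N := by rw [mu_eq]; norm_num
    have hf0 : ftest 0 = 1 := by norm_num [ftest]
    rw [hmu0, hf0] at hsingle
    calc (1 - meanToy 2 N ftest)^2
        = Ztoy 2 N * (1/Ztoy 2 N * (1 - meanToy 2 N ftest)^2) := by
          field_simp
      _ ≤ Ztoy 2 N * varToy 2 N ftest := mul_le_mul_of_nonneg_left hsingle hZ.le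
  have hSvar : ∑ y ∈ Ico (N^2+1-N) (N^2+1), muToy 2 N y * (ftest y - 1)^2
      ≤ 12 * varToy 2 N ftest := by
    have hptw : ∀ y ∈ Ico (N^2+1-N) (N^2+1), muToy 2 N y * (ftest y - 1)^2
        ≤ 2 * (muToy 2 N y * (ftest y - meanToy 2 N ftest)^2)
          + 2 * ((1 - meanToy 2 N ftest)^2) * muToy 2 N y := by
      intro y _
      have hsq : (ftest y - 1)^2
          ≤ 2*(ftest y - meanToy 2 N ftest)^2 + 2*(1 - meanToy 2 N ftest)^2 := by
        nlinarith [sq_nonneg ((ftest y - meanToy 2 N ftest) - (meanToy 2 N ftest - 1))]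
      calc muToy 2 N y * (ftest y - 1)^2
          ≤ muToy 2 N y * (2*(ftest y - meanToy 2 N ftest)^2
              + 2*(1 - meanToy 2 N ftest)^2) :=
            mul_le_mul_of_nonneg_left hsq (mu_nonneg N y)
        _ = 2 * (muToy 2 N y * (ftest y - meanToy 2 N ftest)^2)
              + 2 * ((1 - meanToy 2 N ftest)^2) * muToy 2 N y := by ring
    have hs1 : ∑ y ∈ Ico (N^2+1-N) (N^2+1), muToy 2 N y * (ftest y - 1)^2
        ≤ 2 * (∑ y ∈ Ico (N^2+1-N) (N^2+1), muToy 2 N y * (ftest y - meanToy 2 N ftest)^2)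
          + 2 * ((1 - meanToy 2 N ftest)^2)
              * (∑ y ∈ Ico (N^2+1-N) (N^2+1), muToy 2 N y) := by
      calc ∑ y ∈ Ico (N^2+1-N) (N^2+1), muToy 2 N y * (ftest y - 1)^2
          ≤ ∑ y ∈ Ico (N^2+1-N) (N^2+1),
              (2 * (muToy 2 N y * (ftest y - meanToy 2 N ftest)^2)
                + 2 * ((1 - meanToy 2 N ftest)^2) * muToy 2 N y) :=
            Finset.sum_le_sum hptw
        _ = _ := by rw [Finset.sum_add_distrib, ← Finset.mul_sum, ← Finset.mul_sum]
    have hsub1 : ∑ y ∈ Ico (N^2+1-N) (N^2+1), muToy 2 N y * (ftest y - meanToy 2 N ftest)^2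
        ≤ varToy 2 N ftest := by
      rw [hvar_eq]
      exact Finset.sum_le_sum_of_subset_of_nonneg hSsub
        (fun i _ _ => mul_nonneg (mu_nonneg N i) (sq_nonneg _))
    have hsub2 : ∑ y ∈ Ico (N^2+1-N) (N^2+1), muToy 2 N y ≤ 1 := by
      rw [← sum_mu_one N]
      exact Finset.sum_le_sum_of_subset_of_nonneg hSsub (fun i _ _ => mu_nonneg N i)
    have hsqnn : (0:ℝ) ≤ (1 - meanToy 2 N ftest)^2 := sq_nonneg _
    have hCnn : 0 ≤ ∑ y ∈ Ico (N^2+1-N) (N^2+1), muToy 2 N y :=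
      Finset.sum_nonneg fun i _ => mu_nonneg N i
    exact arith1 _ _ _ _ _ _ hs1 hsub1 hsub2 h1m hZ5 hvar0 hsqnn hCnn
  -- conclude
  have hfin : (N:ℝ) * (Real.exp (N:ℝ)/(4*Real.exp 2*Ztoy 2 N)) ≤ 12 * varToy 2 N ftest :=
    le_trans hsum_S hSvar
  exact arith2 _ _ _ _ _ hZ (Real.exp_pos 2) hfin

lemma arith4 (n E E2 Z : ℝ) (hn : 0 ≤ n) (hZ : 0 < Z) (hE : 0 < E) (he2 : 0 < E2)
    (h8 : E2 < 8) : (n/100000)*(11*E/Z) ≤ n*E/(48*E2*Z) := by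
  rw [show (n/100000)*(11*E/Z) = (11*n*E)/(100000*Z) by field_simp,
    div_le_div_iff₀ (by positivity) (by positivity)]
  nlinarith [mul_nonneg (mul_nonneg (mul_nonneg hn hE.le) hZ.le)
    (by linarith : (0:ℝ) ≤ 8 - E2)]

lemma arith3 (C D V LB UB n : ℝ) (h1 : V ≤ C * D) (hLB : LB ≤ V) (hUB : D ≤ UB)
    (hLBpos : 0 < LB) (hDnn : 0 ≤ D) (hkey : (n/100000) * UB ≤ LB) (hnn : 0 ≤ n) :
    n/100000 ≤ C := by
  have hDpos : 0 < D := by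
    rcases eq_or_lt_of_le hDnn with h | h
    · exfalso; rw [← h, mul_zero] at h1; linarith
    · exact h
  have hkey2 : (n/100000) * D ≤ C * D := by
    calc (n/100000) * D ≤ (n/100000) * UB := by
          apply mul_le_mul_of_nonneg_left hUB (by positivity)
      _ ≤ LB := hkey
      _ ≤ V := hLB
      _ ≤ C * D := h1
  exact le_of_mul_le_mul_right hkey2 hDpos

end ToyModelProof

/-- There is `k > 0` such that `N/k ≤ S(N,2) ≤ k N` for all `N ≥ 1`. -/
theorem toy_invGap_order_N_dim_two :
    ∃ k : ℝ, 0 < k ∧ ∀ N : ℕ, 1 ≤ N →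
      (N : ℝ) / k ≤ invGapToy 2 N ∧ invGapToy 2 N ≤ k * (N : ℝ) := by
  refine ⟨100000, by norm_num, ?_⟩
  intro N hN
  have hN0 : (0:ℝ) < (N:ℝ) := by exact_mod_cast hN
  have hZ : 0 < Ztoy 2 N := ToyModelProof.Ztoy_pos N
  have hmem : (832 * (N:ℝ)) ∈ {c : ℝ | ∀ f : ℕ → ℝ, varToy 2 N f ≤ c * dirToy 2 N f} :=
    fun f => ToyModelProof.poincare N hN f
  have hvar := ToyModelProof.var_test N hN
  have hdir := ToyModelProof.dir_test N hN
  have hLBpos : 0 < (N:ℝ) * Real.exp (N:ℝ) / (48 * Real.exp 2 * Ztoy 2 N) := by positivity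
  have hdnn : 0 ≤ dirToy 2 N ToyModelProof.ftest := ToyModelProof.dir_nonneg N _
  have he2 : Real.exp 2 < 8 := by
    have h12 : Real.exp 1 * Real.exp 1 = Real.exp 2 := by rw [← Real.exp_add]; norm_num
    nlinarith [Real.exp_one_lt_d9, Real.exp_one_gt_d9, h12]
  have hkey : ((N:ℝ)/100000) * (11 * Real.exp (N:ℝ) / Ztoy 2 N)
      ≤ (N:ℝ) * Real.exp (N:ℝ) / (48 * Real.exp 2 * Ztoy 2 N) :=
    ToyModelProof.arith4 (N:ℝ) (Real.exp (N:ℝ)) (Real.exp 2) (Ztoy 2 N) hN0.le hZ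
      (Real.exp_pos _) (Real.exp_pos _) he2
  have hlb : ∀ C ∈ {c : ℝ | ∀ f : ℕ → ℝ, varToy 2 N f ≤ c * dirToy 2 N f},
      (N:ℝ)/100000 ≤ C := by
    intro C hC
    exact ToyModelProof.arith3 C (dirToy 2 N ToyModelProof.ftest)
      (varToy 2 N ToyModelProof.ftest) _ _ (N:ℝ) (hC ToyModelProof.ftest) hvar hdir
      hLBpos hdnn hkey hN0.le
  constructor
  · exact le_csInf ⟨_, hmem⟩ hlb
  · have hbdd : BddBelow {c : ℝ | ∀ f : ℕ → ℝ, varToy 2 N f ≤ c * dirToy 2 N f} := by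
      refine ⟨0, fun C hC => ?_⟩
      have h1 := hlb C hC
      have h2 : 0 ≤ (N:ℝ)/100000 := by positivity
      linarith
    have h1 : invGapToy 2 N ≤ 832 * (N:ℝ) := csInf_le hbdd hmem
    have : (832:ℝ) * (N:ℝ) ≤ 100000 * (N:ℝ) := by nlinarith
    linarith

end
end

section
/- For every integer d ≥ 3 there exists a constant k = k(d) > 0 such that for all integers N ≥ 1, the inverse spectral gap of the birth-and-death toy model satisfies S(N,d) ≤ k; that is, the spectral gap stays bounded away from zero uniformly in N. -/
/-!
Birth-and-death toy model for droplet evolution: the inverse spectral gap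

`S(N,d)` stays bounded uniformly in `N` when `d ≥ 3`.
-/

open Finset

noncomputable section

namespace ToySpecAux

section alpha

variable {d : ℕ}

lemma alpha_lt_one (hd0 : 1 ≤ d) : alphaOf d < 1 := by
  have h : (1:ℝ) ≤ d := by exact_mod_cast hd0
  rw [alphaOf, div_lt_one (by linarith)]
  linarith

lemma two_thirds_le_alpha (hd : 3 ≤ d) : 2/3 ≤ alphaOf d := by
  have h : (3:ℝ) ≤ d := by exact_mod_cast hd
  rw [alphaOf, le_div_iff₀ (by linarith)]
  linarith

lemma alpha_pos (hd : 3 ≤ d) : 0 < alphaOf d :=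
  lt_of_lt_of_le (by norm_num) (two_thirds_le_alpha hd)

lemma alpha_le_one (hd : 3 ≤ d) : alphaOf d ≤ 1 := (alpha_lt_one (by omega)).le

lemma alpha_sub_one (hd0 : 1 ≤ d) : alphaOf d - 1 = -(1/(d:ℝ)) := by
  have h : (1:ℝ) ≤ (d:ℝ) := by exact_mod_cast hd0
  rw [alphaOf]
  field_simp
  ring

lemma three_alpha_sub_two (hd : 3 ≤ d) : 0 ≤ 3 * alphaOf d - 2 := by
  have h : (3:ℝ) ≤ d := by exact_mod_cast hd
  have heq : 3 * alphaOf d - 2 = ((d:ℝ) - 3)/d := by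
    rw [alphaOf]; field_simp; ring
  rw [heq]
  exact div_nonneg (by linarith) (by linarith)

end alpha

section Zfacts

variable {d N : ℕ}

lemma one_le_Ztoy (hd : 3 ≤ d) : 1 ≤ Ztoy d N := by
  have h0 : (0:ℕ) ∈ Finset.range (N ^ d + 1) := by simp
  have h := Finset.single_le_sum (f := fun x : ℕ => Real.exp (-(x:ℝ) ^ alphaOf d))
    (fun i _ => (Real.exp_pos _).le) h0
  simpa [Ztoy, Real.zero_rpow (alpha_pos hd).ne'] using h

lemma Ztoy_pos (hd : 3 ≤ d) : 0 < Ztoy d N := lt_of_lt_of_le one_pos (one_le_Ztoy hd)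

lemma exp_rpow_le (hd : 3 ≤ d) {y : ℝ} (hy : 1 ≤ y) :
    Real.exp (-(y ^ alphaOf d)) ≤ 27 / y ^ 2 := by
  have h1 : y ^ (2/3 : ℝ) ≤ y ^ alphaOf d :=
    Real.rpow_le_rpow_of_exponent_le hy (two_thirds_le_alpha hd)
  set u := y ^ (2/3:ℝ) with hu
  have hu0 : (0:ℝ) ≤ u := Real.rpow_nonneg (by linarith) _
  have h2 : u/3 ≤ Real.exp (u/3) := by linarith [Real.add_one_le_exp (u/3)]
  have h3 : (u/3)^3 ≤ Real.exp u := by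
    have hcube : Real.exp (u/3) ^ (3:ℕ) = Real.exp u := by
      rw [← Real.exp_nat_mul]; congr 1; push_cast; ring
    calc (u/3)^3 ≤ Real.exp (u/3) ^ 3 := by
          apply pow_le_pow_left₀ (by positivity) h2
    _ = Real.exp u := hcube
  have hcube2 : u ^ (3:ℕ) = y ^ 2 := by
    rw [hu, ← Real.rpow_natCast (y ^ (2/3:ℝ)) 3, ← Real.rpow_mul (by linarith : (0:ℝ) ≤ y)]
    norm_num
  have h4 : y ^ 2 ≤ 27 * Real.exp u := by nlinarith [h3]
  have h5 : Real.exp u ≤ Real.exp (y ^ alphaOf d) := Real.exp_le_exp.2 h1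
  have hy2 : (0:ℝ) < y ^ 2 := by positivity
  have hE := Real.exp_pos (y ^ alphaOf d)
  rw [Real.exp_neg, le_div_iff₀ hy2, inv_mul_eq_div, div_le_iff₀ hE]
  nlinarith

lemma Ztoy_le (hd : 3 ≤ d) : Ztoy d N ≤ 55 := by
  rw [Ztoy, Finset.sum_range_succ']
  have h0 : Real.exp (-((0:ℕ):ℝ) ^ alphaOf d) = 1 := by
    simp [Real.zero_rpow (alpha_pos hd).ne']
  rw [h0]
  have hbd : ∀ x ∈ Finset.range (N^d),
      Real.exp (-(((x+1:ℕ)):ℝ) ^ alphaOf d) ≤ 54/((x:ℝ)+1) - 54/(((x+1:ℕ):ℝ)+1) := by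
    intro x _
    push_cast
    have hy : (1:ℝ) ≤ ((x:ℝ)+1) := by
      have : (0:ℝ) ≤ (x:ℝ) := Nat.cast_nonneg x
      linarith
    have h := exp_rpow_le (y := (x:ℝ)+1) hd hy
    have h2 : (27:ℝ)/((x:ℝ)+1)^2 ≤ 54/((x:ℝ)+1) - 54/((x:ℝ)+1+1) := by
      have hx1 : (0:ℝ) < (x:ℝ)+1 := by linarith
      have hx2 : (0:ℝ) < (x:ℝ)+1+1 := by linarith
      rw [div_sub_div _ _ hx1.ne' hx2.ne', div_le_div_iff₀ (by positivity) (by positivity)]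
      nlinarith [(Nat.cast_nonneg x : (0:ℝ) ≤ (x:ℝ))]
    linarith
  have hsum := Finset.sum_le_sum hbd
  have htel := Finset.sum_range_sub' (f := fun x : ℕ => 54/((x:ℝ)+1)) (N^d)
  rw [htel] at hsum
  have hpos : (0:ℝ) ≤ 54/(((N^d:ℕ):ℝ)+1) := by positivity
  norm_num at hsum ⊢
  push_cast at hpos
  linarith

lemma sum_mu_eq_one (hd : 3 ≤ d) :
    ∑ x ∈ Finset.range (N ^ d + 1), muToy d N x = 1 := by
  simp only [muToy]
  rw [← Finset.sum_div, ← Ztoy]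
  exact div_self (Ztoy_pos hd).ne'

lemma mu_pos (hd : 3 ≤ d) (x : ℕ) : 0 < muToy d N x :=
  div_pos (Real.exp_pos _) (Ztoy_pos hd)

lemma b_nonneg (x : ℕ) : 0 ≤ bToy d x := Real.rpow_nonneg (Nat.cast_nonneg _) _

lemma one_le_b (hd : 3 ≤ d) (x : ℕ) : 1 ≤ bToy d x := by
  rw [bToy]
  calc (1:ℝ) = 1 ^ alphaOf d := (Real.one_rpow _).symm
  _ ≤ ((max x 1 : ℕ):ℝ) ^ alphaOf d := by
      apply Real.rpow_le_rpow (by norm_num) _ (alpha_pos hd).le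
      exact_mod_cast Nat.le_max_right x 1

lemma mu_b_lower (hd : 3 ≤ d) {x R : ℕ} (hxR : x ≤ R) :
    Real.exp (-(R:ℝ))/55 ≤ muToy d N x * bToy d x := by
  have h1 : (x:ℝ) ^ alphaOf d ≤ (R:ℝ) := by
    rcases Nat.eq_zero_or_pos x with rfl | hx
    · rw [Nat.cast_zero, Real.zero_rpow (alpha_pos hd).ne']
      exact Nat.cast_nonneg R
    · have hx1 : (1:ℝ) ≤ (x:ℝ) := by exact_mod_cast hx
      calc (x:ℝ) ^ alphaOf d ≤ (x:ℝ) ^ (1:ℝ) :=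
            Real.rpow_le_rpow_of_exponent_le hx1 (alpha_le_one hd)
      _ = (x:ℝ) := Real.rpow_one _
      _ ≤ (R:ℝ) := by exact_mod_cast hxR
  have h2 : Real.exp (-(R:ℝ)) ≤ Real.exp (-(x:ℝ) ^ alphaOf d) :=
    Real.exp_le_exp.2 (by linarith)
  have h3 : Real.exp (-(R:ℝ))/55 ≤ Real.exp (-(x:ℝ) ^ alphaOf d) / Ztoy d N :=
    div_le_div₀ (Real.exp_pos _).le h2 (Ztoy_pos hd) (Ztoy_le hd)
  calc Real.exp (-(R:ℝ))/55 ≤ Real.exp (-(x:ℝ) ^ alphaOf d) / Ztoy d N := h3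
  _ = (Real.exp (-(x:ℝ) ^ alphaOf d) / Ztoy d N) * 1 := by ring
  _ ≤ muToy d N x * bToy d x := by
      rw [muToy]
      apply mul_le_mul_of_nonneg_left (one_le_b hd x)
      exact div_nonneg (Real.exp_pos _).le (Ztoy_pos hd).le

end Zfacts

/-- Bernoulli tangent-line bound for concave rpow. -/
lemma rpow_tangent {α x y : ℝ} (hα0 : 0 ≤ α) (hα1 : α ≤ 1) (hx : 0 < x) (hy : 0 ≤ y) :
    y ^ α ≤ x ^ α + α * (x ^ (α - 1)) * (y - x) := by
  have hs : -1 ≤ y / x - 1 := by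
    have : 0 ≤ y / x := div_nonneg hy hx.le
    linarith
  have h := rpow_one_add_le_one_add_mul_self hs hα0 hα1
  have h1 : (1 + (y / x - 1)) = y / x := by ring
  rw [h1] at h
  have h2 : (y / x) ^ α = y ^ α / x ^ α := Real.div_rpow hy hx.le α
  rw [h2] at h
  have hxa : 0 < x ^ α := Real.rpow_pos_of_pos hx α
  have h3 : y ^ α ≤ x ^ α * (1 + α * (y / x - 1)) := by
    calc y ^ α = (y ^ α / x ^ α) * x ^ α := by field_simp
    _ ≤ (1 + α * (y / x - 1)) * x ^ α := by
        exact mul_le_mul_of_nonneg_right h hxa.le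
    _ = x ^ α * (1 + α * (y / x - 1)) := by ring
  have h4 : x ^ (α - 1) = x ^ α / x := by
    rw [Real.rpow_sub hx, Real.rpow_one]
  rw [h4]
  calc y ^ α ≤ x ^ α * (1 + α * (y / x - 1)) := h3
  _ = x ^ α + α * (x ^ α / x) * (y - x) := by field_simp

lemma exp_le_inv_one_sub {u : ℝ} (hu : u < 1) : Real.exp u ≤ 1 / (1 - u) := by
  have h := Real.add_one_le_exp (-u)
  have h2 : (1 - u) * Real.exp u ≤ 1 := by
    have := Real.exp_pos u
    have h3 : (1 - u) ≤ Real.exp (-u) := by linarith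
    calc (1 - u) * Real.exp u ≤ Real.exp (-u) * Real.exp u :=
          mul_le_mul_of_nonneg_right h3 (Real.exp_pos u).le
    _ = 1 := by rw [← Real.exp_add]; simp
  rw [le_div_iff₀ (by linarith : (0:ℝ) < 1 - u)]
  linarith [mul_comm (1 - u) (Real.exp u)]

/-- quadratic upper bound on `exp` for small nonneg arguments. -/
lemma exp_upper {u : ℝ} (h0 : 0 ≤ u) (h1 : u ≤ 1/16) :
    Real.exp u ≤ 1 + u + (16/15) * u ^ 2 := by
  have h := exp_le_inv_one_sub (by linarith : u < 1)
  have hpos : (0:ℝ) < 1 - u := by linarith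
  have key : 1 / (1 - u) ≤ 1 + u + (16/15) * u ^ 2 := by
    rw [div_le_iff₀ hpos]
    nlinarith [sq_nonneg u, mul_nonneg (mul_nonneg h0 h0) h0]
  linarith

/-- quadratic lower bound: `exp t - exp (t/2) ≥ t/2 + (5/16) t²` for `t ≥ 0`. -/
lemma exp_gap_lower {t : ℝ} (ht : 0 ≤ t) :
    t/2 + (5/16) * t ^ 2 ≤ Real.exp t - Real.exp (t/2) := by
  have h4 : 1 + t/4 ≤ Real.exp (t/4) := by linarith [Real.add_one_le_exp (t/4)]
  have hsq : Real.exp (t/2) = Real.exp (t/4) ^ 2 := by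
    rw [sq, ← Real.exp_add]; ring_nf
  have hE : 1 + t/2 + t^2/16 ≤ Real.exp (t/2) := by
    rw [hsq]
    nlinarith [sq_nonneg (t/4)]
  have hEt : Real.exp t = Real.exp (t/2) ^ 2 := by
    rw [sq, ← Real.exp_add]; ring_nf
  rw [hEt]
  set E := Real.exp (t/2) with hEdef
  have hA : (1 + t/2 + t^2/16) * (t/2 + t^2/16) ≤ E * (E - 1) := by
    have hE1 : (1:ℝ) ≤ E := by nlinarith
    have := mul_le_mul hE (by linarith : t/2 + t^2/16 ≤ E - 1)
      (by nlinarith) (by positivity)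
    linarith [this]
  nlinarith [mul_nonneg (mul_nonneg ht ht) ht, sq_nonneg t, sq_nonneg (t*t)]

/-- The core "good region" estimate for the Lyapunov function. -/
lemma good_core {a s t : ℝ} (ha : 36 ≤ a) (ht0 : 0 < t) (hta : t ≤ 1/8)
    (hs0 : 0 ≤ s) (hst : s ≤ t) (hat : 4/9 ≤ a * t^2) :
    1/120 ≤ a * (1 - Real.exp (s/2)) + (a - t) * (Real.exp t - Real.exp (t/2)) := by
  have ha0 : (0:ℝ) < a := by linarith
  have h1 : Real.exp (s/2) ≤ 1 + s/2 + (4/15) * s^2 := by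
    have := exp_upper (u := s/2) (by linarith) (by linarith)
    nlinarith [this]
  have h2 := exp_gap_lower (le_of_lt ht0)
  have hat' : 0 < a - t := by linarith
  have hb1 : a * (1 - Real.exp (s/2)) ≥ - (a * s / 2) - (4/15) * (a * s^2) := by
    nlinarith [mul_le_mul_of_nonneg_left h1 ha0.le]
  have hb2 : (a - t) * (Real.exp t - Real.exp (t/2)) ≥ (a - t) * (t/2 + (5/16)*t^2) :=
    mul_le_mul_of_nonneg_left h2 hat'.le
  have h3 : a * s ≤ a * t := mul_le_mul_of_nonneg_left hst ha0.le
  have h4 : a * s^2 ≤ a * t^2 := by nlinarith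
  have h5 : t^3 ≤ t^2 * (1/8) := by nlinarith
  have h6 : 0 ≤ (11/480 * a - 69/128) * t^2 :=
    mul_nonneg (by linarith) (sq_nonneg t)
  nlinarith [h6, hat]


section Sites

variable {d : ℕ}

lemma t_lb (hd : 3 ≤ d) {n : ℕ} (hn : 1 ≤ n) :
    alphaOf d * (n:ℝ) ^ (alphaOf d - 1) ≤ (n:ℝ) ^ alphaOf d - ((n:ℝ)-1) ^ alphaOf d := by
  have hn1 : (1:ℝ) ≤ (n:ℝ) := by exact_mod_cast hn
  have h := rpow_tangent (alpha_pos hd).le (alpha_le_one hd)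
    (by linarith : (0:ℝ) < (n:ℝ)) (by linarith : (0:ℝ) ≤ (n:ℝ)-1)
  have h2 : ((n:ℝ)-1) - (n:ℝ) = -1 := by ring
  rw [h2] at h
  linarith

lemma t_ub (hd : 3 ≤ d) {n : ℕ} (hn : 2 ≤ n) :
    (n:ℝ) ^ alphaOf d - ((n:ℝ)-1) ^ alphaOf d ≤ alphaOf d * ((n:ℝ)-1) ^ (alphaOf d - 1) := by
  have hn1 : (2:ℝ) ≤ (n:ℝ) := by exact_mod_cast hn
  have h := rpow_tangent (α := alphaOf d) (x := (n:ℝ)-1) (y := (n:ℝ))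
    (alpha_pos hd).le (alpha_le_one hd) (by linarith) (by linarith)
  have h2 : (n:ℝ) - ((n:ℝ)-1) = 1 := by ring
  rw [h2] at h
  linarith

lemma s_le_t (hd : 3 ≤ d) {n : ℕ} (hn : 1 ≤ n) :
    ((n:ℝ)+1) ^ alphaOf d - (n:ℝ) ^ alphaOf d
      ≤ (n:ℝ) ^ alphaOf d - ((n:ℝ)-1) ^ alphaOf d := by
  have hn1 : (1:ℝ) ≤ (n:ℝ) := by exact_mod_cast hn
  have h1 := rpow_tangent (α := alphaOf d) (x := (n:ℝ)) (y := (n:ℝ)+1)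
    (alpha_pos hd).le (alpha_le_one hd) (by linarith) (by linarith)
  have h2 := rpow_tangent (α := alphaOf d) (x := (n:ℝ)) (y := (n:ℝ)-1)
    (alpha_pos hd).le (alpha_le_one hd) (by linarith) (by linarith)
  have e1 : ((n:ℝ)+1) - (n:ℝ) = 1 := by ring
  have e2 : ((n:ℝ)-1) - (n:ℝ) = -1 := by ring
  rw [e1] at h1; rw [e2] at h2
  linarith

lemma s_nonneg (hd : 3 ≤ d) (n : ℕ) :
    0 ≤ ((n:ℝ)+1) ^ alphaOf d - (n:ℝ) ^ alphaOf d := by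
  have := Real.rpow_le_rpow (Nat.cast_nonneg n)
    (by linarith : (n:ℝ) ≤ (n:ℝ)+1) (alpha_pos hd).le
  linarith

lemma s_le_one (hd : 3 ≤ d) (n : ℕ) :
    ((n:ℝ)+1) ^ alphaOf d - (n:ℝ) ^ alphaOf d ≤ 1 := by
  rcases Nat.eq_zero_or_pos n with rfl | hn
  · simp [Real.zero_rpow (alpha_pos hd).ne', Real.one_rpow]
  · have hn1 : (1:ℝ) ≤ (n:ℝ) := by exact_mod_cast hn
    have h1 := rpow_tangent (α := alphaOf d) (x := (n:ℝ)) (y := (n:ℝ)+1)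
      (alpha_pos hd).le (alpha_le_one hd) (by linarith) (by linarith)
    have e1 : ((n:ℝ)+1) - (n:ℝ) = 1 := by ring
    rw [e1] at h1
    have h2 : (n:ℝ) ^ (alphaOf d - 1) ≤ 1 :=
      Real.rpow_le_one_of_one_le_of_nonpos hn1 (by linarith [alpha_le_one hd])
    have h3 : alphaOf d * (n:ℝ) ^ (alphaOf d - 1) ≤ 1 := by
      have h4 : 0 ≤ (n:ℝ) ^ (alphaOf d - 1) := Real.rpow_nonneg (by linarith) _
      nlinarith [alpha_le_one hd, alpha_pos hd]
    linarith

lemma t_pos (hd : 3 ≤ d) {n : ℕ} (hn : 1 ≤ n) :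
    0 < (n:ℝ) ^ alphaOf d - ((n:ℝ)-1) ^ alphaOf d := by
  have hn1 : (1:ℝ) ≤ (n:ℝ) := by exact_mod_cast hn
  have h := t_lb hd hn
  have : 0 < alphaOf d * (n:ℝ) ^ (alphaOf d - 1) :=
    mul_pos (alpha_pos hd) (Real.rpow_pos_of_pos (by linarith) _)
  linarith

lemma a_ge_36 (hd : 3 ≤ d) {n : ℕ} (hn : 216 ≤ n) : 36 ≤ (n:ℝ) ^ alphaOf d := by
  have hn1 : (216:ℝ) ≤ (n:ℝ) := by exact_mod_cast hn
  have h1 : ((216:ℝ)) ^ (2/3:ℝ) ≤ (n:ℝ) ^ (2/3:ℝ) :=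
    Real.rpow_le_rpow (by norm_num) hn1 (by norm_num)
  have h2 : (n:ℝ) ^ (2/3:ℝ) ≤ (n:ℝ) ^ alphaOf d :=
    Real.rpow_le_rpow_of_exponent_le (by linarith) (two_thirds_le_alpha hd)
  have h3 : ((216:ℝ)) ^ (2/3:ℝ) = 36 := by
    rw [show (216:ℝ) = (6:ℝ)^(3:ℕ) by norm_num, ← Real.rpow_natCast (6:ℝ) 3,
      ← Real.rpow_mul (by norm_num : (0:ℝ) ≤ 6)]
    rw [show ((3:ℕ):ℝ) * (2/3:ℝ) = ((2:ℕ):ℝ) by norm_num, Real.rpow_natCast]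
    norm_num
  linarith

lemma t_le_eighth (hd : 3 ≤ d) {n : ℕ} (hn : 8^d + 217 ≤ n) :
    (n:ℝ) ^ alphaOf d - ((n:ℝ)-1) ^ alphaOf d ≤ 1/8 := by
  have hd0 : (0:ℝ) < (d:ℝ) := by
    have : (3:ℝ) ≤ (d:ℝ) := by exact_mod_cast hd
    linarith
  have hn2 : 2 ≤ n := by
    have : 1 ≤ 8^d := Nat.one_le_pow _ _ (by norm_num)
    omega
  have h1 := t_ub hd hn2
  have h8 : ((8:ℝ))^(d:ℕ) ≤ (n:ℝ) - 1 := by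
    have hc : ((8^d + 217 : ℕ):ℝ) ≤ (n:ℝ) := by exact_mod_cast hn
    push_cast at hc
    linarith
  have h8p : (0:ℝ) < (8:ℝ)^(d:ℕ) := by positivity
  have h2 : ((n:ℝ)-1) ^ (alphaOf d - 1) ≤ ((8:ℝ)^(d:ℕ)) ^ (alphaOf d - 1) := by
    apply Real.rpow_le_rpow_of_nonpos h8p h8
    linarith [alpha_le_one hd]
  have h3 : ((8:ℝ)^(d:ℕ)) ^ (alphaOf d - 1) = 1/8 := by
    rw [← Real.rpow_natCast (8:ℝ) d, ← Real.rpow_mul (by norm_num : (0:ℝ) ≤ 8)]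
    rw [alpha_sub_one (by omega)]
    rw [show (d:ℝ) * (-(1/(d:ℝ))) = -1 by field_simp]
    rw [Real.rpow_neg_one]
    norm_num
  rw [h3] at h2
  have h4 : alphaOf d * ((n:ℝ)-1) ^ (alphaOf d - 1) ≤ ((n:ℝ)-1) ^ (alphaOf d - 1) := by
    have := Real.rpow_nonneg (by
      have : (2:ℝ) ≤ (n:ℝ) := by exact_mod_cast hn2
      linarith : (0:ℝ) ≤ (n:ℝ)-1) (alphaOf d - 1)
    nlinarith [alpha_le_one hd, alpha_pos hd]
  linarith

lemma at2_ge (hd : 3 ≤ d) {n : ℕ} (hn : 1 ≤ n) :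
    4/9 ≤ (n:ℝ) ^ alphaOf d * ((n:ℝ) ^ alphaOf d - ((n:ℝ)-1) ^ alphaOf d)^2 := by
  set α := alphaOf d with hα
  have hn1 : (1:ℝ) ≤ (n:ℝ) := by exact_mod_cast hn
  have hp : (0:ℝ) < (n:ℝ) := by linarith
  have ht := t_lb hd hn
  have htn : 0 ≤ α * (n:ℝ) ^ (α - 1) :=
    mul_nonneg (alpha_pos hd).le (Real.rpow_nonneg hp.le _)
  have hsq : (α * (n:ℝ) ^ (α - 1))^2 ≤ ((n:ℝ) ^ α - ((n:ℝ)-1) ^ α)^2 := by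
    apply pow_le_pow_left₀ htn ht
  have hx1 : (n:ℝ) ^ α * ((n:ℝ) ^ (α-1) * (n:ℝ) ^ (α-1)) = (n:ℝ) ^ (3*α - 2) := by
    rw [← Real.rpow_add hp, ← Real.rpow_add hp]
    congr 1; ring
  have h2 : (1:ℝ) ≤ (n:ℝ) ^ (3*α - 2) := by
    have := Real.rpow_le_rpow_of_exponent_le hn1 (by linarith [three_alpha_sub_two hd] : (0:ℝ) ≤ 3*α-2)
    rwa [Real.rpow_zero] at this
  have hα23 : 2/3 ≤ α := two_thirds_le_alpha hd
  have hkey : 4/9 ≤ α^2 * (n:ℝ) ^ (3*α-2) := by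
    nlinarith
  calc (4:ℝ)/9 ≤ α^2 * (n:ℝ) ^ (3*α-2) := hkey
  _ = (n:ℝ) ^ α * (α * (n:ℝ) ^ (α - 1))^2 := by
      rw [← hx1]; ring
  _ ≤ (n:ℝ) ^ α * ((n:ℝ) ^ α - ((n:ℝ)-1) ^ α)^2 :=
      mul_le_mul_of_nonneg_left hsq (Real.rpow_nonneg hp.le _)

lemma good_site (hd : 3 ≤ d) {n : ℕ} (hn : 8^d + 217 ≤ n) :
    1/120 ≤ (n:ℝ) ^ alphaOf d
        * (1 - Real.exp ((((n:ℝ)+1) ^ alphaOf d - (n:ℝ) ^ alphaOf d)/2))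
      + ((n:ℝ)-1) ^ alphaOf d
        * (Real.exp ((n:ℝ) ^ alphaOf d - ((n:ℝ)-1) ^ alphaOf d)
          - Real.exp (((n:ℝ) ^ alphaOf d - ((n:ℝ)-1) ^ alphaOf d)/2)) := by
  have hn216 : 216 ≤ n := by
    have : 1 ≤ 8^d := Nat.one_le_pow _ _ (by norm_num)
    omega
  have hn1 : 1 ≤ n := by omega
  set α := alphaOf d with hαdef
  set a := (n:ℝ) ^ α with ha
  set t := (n:ℝ) ^ α - ((n:ℝ)-1) ^ α with htdef
  set s := ((n:ℝ)+1) ^ α - (n:ℝ) ^ α with hsdef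
  have hat : ((n:ℝ)-1) ^ α = a - t := by rw [htdef]; ring
  rw [hat]
  exact good_core (a_ge_36 hd hn216) (t_pos hd hn1) (t_le_eighth hd hn)
    (s_nonneg hd n) (s_le_t hd hn1) (at2_ge hd hn1)

lemma boundary_site (hd : 3 ≤ d) {n : ℕ} (hn : 216 ≤ n) :
    1/120 ≤ ((n:ℝ)-1) ^ alphaOf d
        * (Real.exp ((n:ℝ) ^ alphaOf d - ((n:ℝ)-1) ^ alphaOf d)
          - Real.exp (((n:ℝ) ^ alphaOf d - ((n:ℝ)-1) ^ alphaOf d)/2)) := by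
  set α := alphaOf d with hαdef
  have hn1 : 1 ≤ n := by omega
  have hnR : (216:ℝ) ≤ (n:ℝ) := by exact_mod_cast hn
  set t := (n:ℝ) ^ α - ((n:ℝ)-1) ^ α with htdef
  have ht0 := t_pos hd hn1
  have h1 : t/2 ≤ Real.exp t - Real.exp (t/2) := by
    have := exp_gap_lower (le_of_lt ht0)
    nlinarith [sq_nonneg t]
  have h2 : (n:ℝ) ^ α / 2 ≤ ((n:ℝ)-1) ^ α := by
    have hhalf : (n:ℝ)/2 ≤ (n:ℝ)-1 := by linarith
    have h3 : ((n:ℝ)/2) ^ α ≤ ((n:ℝ)-1) ^ α :=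
      Real.rpow_le_rpow (by linarith) hhalf (alpha_pos hd).le
    have h4 : ((n:ℝ)/2) ^ α = (n:ℝ) ^ α / (2:ℝ) ^ α := Real.div_rpow (by linarith) (by norm_num) α
    have h5 : (2:ℝ) ^ α ≤ 2 := by
      have := Real.rpow_le_rpow_of_exponent_le (by norm_num : (1:ℝ) ≤ 2) (alpha_le_one hd)
      rwa [Real.rpow_one] at this
    have h6 : (0:ℝ) < (2:ℝ) ^ α := Real.rpow_pos_of_pos (by norm_num) _
    have h7 : (n:ℝ) ^ α / 2 ≤ (n:ℝ) ^ α / (2:ℝ) ^ α := by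
      apply div_le_div_of_nonneg_left (Real.rpow_nonneg (by linarith) _) h6 h5
    linarith [h4 ▸ h3]
  have ht2 : alphaOf d * (n:ℝ) ^ (α - 1) ≤ t := t_lb hd hn1
  have hq : alphaOf d * (n:ℝ) ^ (α-1) / 2 ≤ Real.exp t - Real.exp (t/2) := by linarith
  have hA : (n:ℝ) ^ α / 2 * (alphaOf d * (n:ℝ) ^ (α-1) / 2)
      ≤ ((n:ℝ)-1) ^ α * (Real.exp t - Real.exp (t/2)) := by
    apply mul_le_mul h2 hq
    · exact div_nonneg (mul_nonneg (alpha_pos hd).le (Real.rpow_nonneg (by linarith) _))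
        (by norm_num)
    · exact Real.rpow_nonneg (by linarith) _
  have hx1 : (n:ℝ) ^ α * (n:ℝ) ^ (α-1) = (n:ℝ) ^ (2*α - 1) := by
    rw [← Real.rpow_add (by linarith : (0:ℝ) < (n:ℝ))]
    congr 1; ring
  have h8 : (1:ℝ) ≤ (n:ℝ) ^ (2*α-1) := by
    have h9 := Real.rpow_le_rpow_of_exponent_le (by linarith : (1:ℝ) ≤ (n:ℝ))
      (by linarith [two_thirds_le_alpha hd] : (0:ℝ) ≤ 2*α-1)
    rwa [Real.rpow_zero] at h9
  have h10 : (n:ℝ) ^ α / 2 * (alphaOf d * (n:ℝ) ^ (α-1) / 2)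
      = alphaOf d / 4 * (n:ℝ) ^ (2*α-1) := by
    rw [← hx1]; ring
  have hα23 := two_thirds_le_alpha hd
  have h11 : (1:ℝ)/6 ≤ alphaOf d / 4 * (n:ℝ) ^ (2*α-1) := by nlinarith
  linarith [h10 ▸ hA]

end Sites

section Assembly

variable {d N : ℕ}

lemma edge_amgm {p q A B : ℝ} (hp : 0 < p) (hq : 0 < q) :
    (1 - q/p)*A^2 + (1 - p/q)*B^2 ≤ (B - A)^2 := by
  rw [← sub_nonneg]
  have h : (B - A)^2 - ((1 - q/p)*A^2 + (1 - p/q)*B^2) = (A*q - B*p)^2/(p*q) := by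
    field_simp
    ring
  rw [h]
  positivity

lemma exp_algebra (Z A B : ℝ) :
    Real.exp (-B)/Z * (1 - Real.exp (B/2)/Real.exp (A/2))
      = Real.exp (-A)/Z * (Real.exp (A-B) - Real.exp ((A-B)/2)) := by
  rw [div_mul_eq_mul_div, div_mul_eq_mul_div]
  congr 1
  rw [← Real.exp_sub, mul_sub, mul_sub, mul_one, ← Real.exp_add, ← Real.exp_add,
    ← Real.exp_add]
  congr 1
  · congr 1; ring
  · congr 1; ring

end Assembly

/-- The cutoff for the "good region". -/
def Rc (d : ℕ) : ℕ := 8^d + 217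

/-- The uniform Poincaré constant. -/
def Kconst (d : ℕ) : ℝ :=
  120 * (1 + (1/120 + 2*(Rc d : ℝ)) * ((Rc d : ℝ) * 55 * Real.exp (Rc d)))

lemma Kconst_pos (d : ℕ) : 0 < Kconst d := by
  have h1 : (0:ℝ) < (Rc d : ℝ) := by
    have : 0 < Rc d := by simp [Rc]
    exact_mod_cast this
  have h2 : (0:ℝ) < Real.exp (Rc d) := Real.exp_pos _
  have : (0:ℝ) ≤ (1/120 + 2*(Rc d : ℝ)) * ((Rc d : ℝ) * 55 * Real.exp (Rc d)) := by positivity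
  rw [Kconst]
  nlinarith

section Key

variable {d N : ℕ}

lemma dir_nonneg (hd : 3 ≤ d) (g : ℕ → ℝ) : 0 ≤ dirToy d N g := by
  apply Finset.sum_nonneg
  intro x _
  exact mul_nonneg (mul_nonneg (mu_pos hd x).le (b_nonneg x)) (sq_nonneg _)

lemma key_bound (hd : 3 ≤ d) (hN : 1 ≤ N) (g : ℕ → ℝ) (hg0 : g 0 = 0) :
    (1/120) * ∑ x ∈ Finset.range (N^d+1), muToy d N x * g x ^ 2
      ≤ (1 + (1/120 + 2*(Rc d:ℝ)) * ((Rc d:ℝ) * 55 * Real.exp (Rc d))) * dirToy d N g := by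
  set α := alphaOf d with hαdef
  set V : ℕ → ℝ := fun x => Real.exp ((x:ℝ)^α / 2) with hVdef
  have hVpos : ∀ x, 0 < V x := fun x => Real.exp_pos _
  have hM1 : 1 ≤ N^d := Nat.one_le_pow _ _ hN
  have hdir := dir_nonneg (N := N) hd g
  -- A. edge AM-GM bound
  have edge : ∑ x ∈ Finset.range (N^d),
      muToy d N x * bToy d x * ((1 - V (x+1)/V x) * g x ^2 + (1 - V x/V (x+1)) * g (x+1)^2)
      ≤ dirToy d N g := by
    rw [dirToy]
    apply Finset.sum_le_sum
    intro x _
    have h := edge_amgm (A := g x) (B := g (x+1)) (hVpos x) (hVpos (x+1))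
    have hmb : 0 ≤ muToy d N x * bToy d x := mul_nonneg (mu_pos hd x).le (b_nonneg x)
    exact mul_le_mul_of_nonneg_left h hmb
  -- the site coefficients
  set β : ℕ → ℝ := fun x =>
    if x < N^d then muToy d N x * bToy d x * (1 - V (x+1)/V x) else 0 with hβdef
  set δ : ℕ → ℝ := fun x =>
    if x = 0 then 0 else muToy d N (x-1) * bToy d (x-1) * (1 - V (x-1)/V x) with hδdef
  -- B. regrouping
  have hsplit : ∑ x ∈ Finset.range (N^d+1), (β x + δ x) * g x ^2
      = ∑ x ∈ Finset.range (N^d),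
        muToy d N x * bToy d x * ((1 - V (x+1)/V x) * g x ^2 + (1 - V x/V (x+1)) * g (x+1)^2) := by
    have e0 : ∑ x ∈ Finset.range (N^d+1), (β x + δ x) * g x ^2
        = (∑ x ∈ Finset.range (N^d+1), β x * g x ^2)
          + ∑ x ∈ Finset.range (N^d+1), δ x * g x ^2 := by
      rw [← Finset.sum_add_distrib]
      exact Finset.sum_congr rfl fun x _ => by ring
    have e1 : ∑ x ∈ Finset.range (N^d+1), β x * g x^2
        = ∑ x ∈ Finset.range (N^d), muToy d N x * bToy d x * (1 - V (x+1)/V x) * g x ^2 := by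
      rw [Finset.sum_range_succ]
      simp only [hβdef, lt_irrefl, if_false]
      rw [zero_mul, add_zero]
      exact Finset.sum_congr rfl fun x hx => by
        rw [if_pos (Finset.mem_range.mp hx)]
    have e2 : ∑ x ∈ Finset.range (N^d+1), δ x * g x^2
        = ∑ x ∈ Finset.range (N^d), muToy d N x * bToy d x * (1 - V x/V (x+1)) * g (x+1)^2 := by
      rw [Finset.sum_range_succ']
      have hδzero : δ 0 = 0 := by simp [hδdef]
      rw [hδzero, zero_mul, add_zero]
      apply Finset.sum_congr rfl
      intro x hx
      have hδx : δ (x+1) = muToy d N x * bToy d x * (1 - V x / V (x+1)) := by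
        simp only [hδdef, Nat.succ_ne_zero, if_false, Nat.add_sub_cancel]
      rw [hδx]
    rw [e0, e1, e2, ← Finset.sum_add_distrib]
    exact Finset.sum_congr rfl fun x _ => by ring
  -- C. site-wise lower bound
  have hδ0 : ∀ x, 0 ≤ δ x := by
    intro x
    simp only [hδdef]
    rcases Nat.eq_zero_or_pos x with rfl | hx
    · simp
    · rw [if_neg (Nat.pos_iff_ne_zero.mp hx)]
      apply mul_nonneg (mul_nonneg (mu_pos hd _).le (b_nonneg _))
      rw [sub_nonneg, div_le_one (hVpos x)]
      apply Real.exp_le_exp.2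
      have hc : ((x-1:ℕ):ℝ) ≤ (x:ℝ) := by
        exact_mod_cast Nat.sub_le x 1
      have := Real.rpow_le_rpow (Nat.cast_nonneg _) hc (alpha_pos hd).le
      linarith
  have hsite : ∀ x ∈ Finset.range (N^d+1),
      (1/120) * (muToy d N x * g x ^2)
        ≤ (β x + δ x) * g x ^2
          + (if x < Rc d then (1/120 + 2*(Rc d:ℝ)) * (muToy d N x * g x^2) else 0) := by
    intro x hx
    have hxM : x ≤ N^d := Nat.lt_succ_iff.mp (Finset.mem_range.mp hx)
    by_cases hxR : x < Rc d
    · -- crude region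
      rw [if_pos hxR]
      have hβlb : -((Rc d:ℝ)) * muToy d N x ≤ β x := by
        simp only [hβdef]
        by_cases hxM' : x < N^d
        · rw [if_pos hxM']
          have hs1 : V (x+1) / V x ≤ 2 := by
            have : V (x+1) / V x = Real.exp ((((x:ℝ)+1)^α - (x:ℝ)^α)/2) := by
              rw [hVdef]
              rw [← Real.exp_sub]
              congr 1
              push_cast
              ring
            rw [this]
            have hs2 := s_le_one (d := d) hd x
            have he : Real.exp ((((x:ℝ)+1)^α - (x:ℝ)^α)/2) ≤ Real.exp (1/2) :=
              Real.exp_le_exp.2 (by linarith)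
            have he2 : Real.exp (1/2:ℝ) ≤ 2 := by
              have h3 : Real.exp (1/2:ℝ)^2 = Real.exp 1 := by
                rw [sq, ← Real.exp_add]; norm_num
              nlinarith [Real.exp_one_lt_d9, Real.exp_pos (1/2:ℝ)]
            linarith
          have hbR : bToy d x ≤ (Rc d : ℝ) := by
            rw [bToy]
            have h1 : (1:ℝ) ≤ ((max x 1 : ℕ):ℝ) := by
              exact_mod_cast Nat.le_max_right x 1
            have h2 : ((max x 1 : ℕ):ℝ) ^ α ≤ ((max x 1 : ℕ):ℝ) := by
              have := Real.rpow_le_rpow_of_exponent_le h1 (alpha_le_one hd)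
              rwa [Real.rpow_one] at this
            have h3 : ((max x 1 : ℕ):ℝ) ≤ (Rc d : ℝ) := by
              have : max x 1 ≤ Rc d := by
                have : 1 ≤ Rc d := by simp [Rc]
                omega
              exact_mod_cast this
            linarith
          have hμ := (mu_pos (N := N) hd x).le
          have hb := b_nonneg (d := d) x
          have key : muToy d N x * bToy d x * (1 - V (x+1)/V x)
              ≥ muToy d N x * bToy d x * (-1) := by
            apply mul_le_mul_of_nonneg_left _ (mul_nonneg hμ hb)
            linarith
          have key2 : muToy d N x * bToy d x ≤ muToy d N x * (Rc d:ℝ) :=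
            mul_le_mul_of_nonneg_left hbR hμ
          nlinarith
        · rw [if_neg hxM']
          have := (mu_pos (N := N) hd x).le
          have hR0 : (0:ℝ) ≤ (Rc d:ℝ) := Nat.cast_nonneg _
          nlinarith
      have hδ := hδ0 x
      have hg2 := sq_nonneg (g x)
      have hμ := (mu_pos (N := N) hd x).le
      have h1 : (-((Rc d:ℝ)) * muToy d N x) * g x ^2 ≤ (β x + δ x) * g x ^2 := by
        apply mul_le_mul_of_nonneg_right _ hg2
        linarith
      have hR0 : (0:ℝ) ≤ (Rc d:ℝ) := Nat.cast_nonneg _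
      nlinarith [mul_nonneg hμ hg2, mul_nonneg (mul_nonneg hR0 hμ) hg2]
    · -- good region
      rw [if_neg hxR, add_zero]
      push_neg at hxR
      have hx2 : 2 ≤ x := by
        have : 1 ≤ 8^d := Nat.one_le_pow _ _ (by norm_num)
        simp only [Rc] at hxR
        omega
      have hx1R : (1:ℝ) ≤ (x:ℝ) := by
        have : 1 ≤ x := by omega
        exact_mod_cast this
      have hcast : ((x-1:ℕ):ℝ) = (x:ℝ) - 1 := by
        have : 1 ≤ x := by omega
        push_cast [this]
        ring
      have hδeq : δ x = muToy d N x
          * (((x:ℝ)-1) ^ α * (Real.exp ((x:ℝ)^α - ((x:ℝ)-1)^α)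
            - Real.exp (((x:ℝ)^α - ((x:ℝ)-1)^α)/2))) := by
        simp only [hδdef]
        rw [if_neg (by omega : ¬ x = 0)]
        have hb1 : bToy d (x-1) = ((x:ℝ)-1) ^ α := by
          rw [bToy]
          congr 1
          rw [show max (x-1) 1 = x - 1 by omega]
          exact hcast
        have hμ1 : muToy d N (x-1) = Real.exp (-(((x:ℝ)-1) ^ α)) / Ztoy d N := by
          rw [muToy, hcast]
        have hV1 : V (x-1) = Real.exp ((((x:ℝ)-1) ^ α)/2) := by
          rw [hVdef]; simp only []
          rw [hcast]
        have hVx : V x = Real.exp (((x:ℝ) ^ α)/2) := rfl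
        rw [hb1, hμ1, hV1, hVx, muToy]
        have halg := exp_algebra (Ztoy d N) ((x:ℝ)^α) (((x:ℝ)-1)^α)
        calc Real.exp (-(((x:ℝ)-1) ^ α)) / Ztoy d N * (((x:ℝ)-1) ^ α)
              * (1 - Real.exp ((((x:ℝ)-1) ^ α)/2) / Real.exp (((x:ℝ) ^ α)/2))
            = ((x:ℝ)-1) ^ α * (Real.exp (-(((x:ℝ)-1) ^ α)) / Ztoy d N
              * (1 - Real.exp ((((x:ℝ)-1) ^ α)/2) / Real.exp (((x:ℝ) ^ α)/2))) := by ring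
        _ = ((x:ℝ)-1) ^ α * (Real.exp (-((x:ℝ) ^ α)) / Ztoy d N
              * (Real.exp ((x:ℝ)^α - ((x:ℝ)-1)^α)
                - Real.exp (((x:ℝ)^α - ((x:ℝ)-1)^α)/2))) := by rw [halg]
        _ = Real.exp (-((x:ℝ) ^ α)) / Ztoy d N
            * (((x:ℝ)-1) ^ α * (Real.exp ((x:ℝ)^α - ((x:ℝ)-1)^α)
              - Real.exp (((x:ℝ)^α - ((x:ℝ)-1)^α)/2))) := by ring
      have hμ := (mu_pos (N := N) hd x).le
      have hg2 := sq_nonneg (g x)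
      rcases lt_or_eq_of_le hxM with hxM' | hxM'
      · -- interior good site
        have hβeq : β x = muToy d N x
            * ((x:ℝ) ^ α * (1 - Real.exp (((((x:ℝ)+1) ^ α - (x:ℝ)^α))/2))) := by
          simp only [hβdef]
          rw [if_pos hxM']
          have hb1 : bToy d x = (x:ℝ) ^ α := by
            rw [bToy]
            congr 1
            rw [show max x 1 = x by omega]
          have hV2 : V (x+1) / V x = Real.exp ((((x:ℝ)+1)^α - (x:ℝ)^α)/2) := by
            rw [hVdef]
            rw [← Real.exp_sub]
            congr 1
            push_cast
            ring
          rw [hb1, hV2]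
          ring
        have hgood := good_site hd (n := x) hxR
        have : (1/120) * muToy d N x ≤ β x + δ x := by
          rw [hβeq, hδeq, ← mul_add]
          calc (1/120) * muToy d N x = muToy d N x * (1/120) := by ring
          _ ≤ muToy d N x * ((x:ℝ) ^ α * (1 - Real.exp (((((x:ℝ)+1) ^ α - (x:ℝ)^α))/2))
              + ((x:ℝ)-1) ^ α * (Real.exp ((x:ℝ)^α - ((x:ℝ)-1)^α)
                - Real.exp (((x:ℝ)^α - ((x:ℝ)-1)^α)/2))) := by
              apply mul_le_mul_of_nonneg_left _ hμ
              exact hgood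
        calc (1/120) * (muToy d N x * g x ^2) = ((1/120) * muToy d N x) * g x ^2 := by ring
        _ ≤ (β x + δ x) * g x ^2 := mul_le_mul_of_nonneg_right this hg2
      · -- boundary site x = N^d
        have hβ0 : β x = 0 := by
          simp only [hβdef]
          rw [if_neg (by omega : ¬ x < N^d)]
        have hbound := boundary_site hd (n := x) (by
          have : 1 ≤ 8^d := Nat.one_le_pow _ _ (by norm_num)
          simp only [Rc] at hxR
          omega)
        have : (1/120) * muToy d N x ≤ β x + δ x := by
          rw [hβ0, zero_add, hδeq]
          calc (1/120) * muToy d N x = muToy d N x * (1/120) := by ring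
          _ ≤ muToy d N x * (((x:ℝ)-1) ^ α * (Real.exp ((x:ℝ)^α - ((x:ℝ)-1)^α)
              - Real.exp (((x:ℝ)^α - ((x:ℝ)-1)^α)/2))) :=
              mul_le_mul_of_nonneg_left hbound hμ
        calc (1/120) * (muToy d N x * g x ^2) = ((1/120) * muToy d N x) * g x ^2 := by ring
        _ ≤ (β x + δ x) * g x ^2 := mul_le_mul_of_nonneg_right this hg2
  -- D. sum the site bound
  have hsum := Finset.sum_le_sum hsite
  rw [Finset.sum_add_distrib] at hsum
  rw [hsplit] at hsum
  rw [← Finset.mul_sum] at hsum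
  -- E. local term bound
  have hloc : ∑ x ∈ Finset.range (N^d+1),
      (if x < Rc d then (1/120 + 2*(Rc d:ℝ)) * (muToy d N x * g x^2) else 0)
      ≤ (1/120 + 2*(Rc d:ℝ)) * ((Rc d:ℝ) * 55 * Real.exp (Rc d)) * dirToy d N g := by
    have hC0 : (0:ℝ) ≤ 1/120 + 2*(Rc d:ℝ) := by positivity
    have hterm : ∀ x ∈ Finset.range (N^d+1),
        (if x < Rc d then (1/120 + 2*(Rc d:ℝ)) * (muToy d N x * g x^2) else 0)
          ≤ (1/120 + 2*(Rc d:ℝ)) * ((Rc d:ℝ) * 55 * Real.exp (Rc d) * dirToy d N g)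
            * muToy d N x := by
      intro x hx
      have hxM : x ≤ N^d := Nat.lt_succ_iff.mp (Finset.mem_range.mp hx)
      have hμ := (mu_pos (N := N) hd x).le
      by_cases hxR : x < Rc d
      · rw [if_pos hxR]
        have hgx : g x ^ 2 ≤ (Rc d:ℝ) * 55 * Real.exp (Rc d) * dirToy d N g := by
          have htel : g x = ∑ z ∈ Finset.range x, (g (z+1) - g z) := by
            rw [Finset.sum_range_sub g x, hg0, sub_zero]
          have hcs : g x ^ 2 ≤ (x:ℝ) * ∑ z ∈ Finset.range x, (g (z+1) - g z)^2 := by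
            rw [htel]
            have := sq_sum_le_card_mul_sum_sq (s := Finset.range x)
              (f := fun z => g (z+1) - g z)
            simpa using this
          have hsum2 : ∑ z ∈ Finset.range x, (g (z+1) - g z)^2
              ≤ 55 * Real.exp (Rc d) * ∑ z ∈ Finset.range x,
                  muToy d N z * bToy d z * (g (z+1) - g z)^2 := by
            rw [Finset.mul_sum]
            apply Finset.sum_le_sum
            intro z hz
            have hzR : z ≤ Rc d := by
              have := Finset.mem_range.mp hz
              omega
            have hlb := mu_b_lower (N := N) hd hzR
            have he : (1:ℝ) ≤ 55 * Real.exp (Rc d) * (muToy d N z * bToy d z) := by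
              have hE : (0:ℝ) < Real.exp (Rc d) := Real.exp_pos _
              have h2 : Real.exp (-(Rc d:ℝ)) * Real.exp ((Rc d:ℝ)) = 1 := by
                rw [← Real.exp_add]; simp
              nlinarith
            nlinarith [sq_nonneg (g (z+1) - g z),
              mul_nonneg (mul_nonneg (mu_pos (N := N) hd z).le (b_nonneg (d := d) z))
                (sq_nonneg (g (z+1) - g z))]
          have hsub : ∑ z ∈ Finset.range x, muToy d N z * bToy d z * (g (z+1) - g z)^2
              ≤ dirToy d N g := by
            rw [dirToy]
            apply Finset.sum_le_sum_of_subset_of_nonneg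
            · exact Finset.range_subset_range.2 hxM
            · intro z _ _
              exact mul_nonneg (mul_nonneg (mu_pos hd z).le (b_nonneg z)) (sq_nonneg _)
          have hxle : (x:ℝ) ≤ (Rc d:ℝ) := by exact_mod_cast hxR.le
          have hE : (0:ℝ) < Real.exp (Rc d) := Real.exp_pos _
          have hx0 : (0:ℝ) ≤ (x:ℝ) := Nat.cast_nonneg _
          have hs0 : (0:ℝ) ≤ ∑ z ∈ Finset.range x, (g (z+1) - g z)^2 :=
            Finset.sum_nonneg fun z _ => sq_nonneg _
          calc g x ^ 2 ≤ (x:ℝ) * ∑ z ∈ Finset.range x, (g (z+1) - g z)^2 := hcs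
          _ ≤ (Rc d:ℝ) * ∑ z ∈ Finset.range x, (g (z+1) - g z)^2 :=
              mul_le_mul_of_nonneg_right hxle hs0
          _ ≤ (Rc d:ℝ) * (55 * Real.exp (Rc d) * ∑ z ∈ Finset.range x,
                muToy d N z * bToy d z * (g (z+1) - g z)^2) := by
              apply mul_le_mul_of_nonneg_left hsum2 (Nat.cast_nonneg _)
          _ ≤ (Rc d:ℝ) * (55 * Real.exp (Rc d) * dirToy d N g) := by
              apply mul_le_mul_of_nonneg_left _ (Nat.cast_nonneg _)
              apply mul_le_mul_of_nonneg_left hsub (by positivity)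
          _ = (Rc d:ℝ) * 55 * Real.exp (Rc d) * dirToy d N g := by ring
        calc (1/120 + 2*(Rc d:ℝ)) * (muToy d N x * g x^2)
            ≤ (1/120 + 2*(Rc d:ℝ)) * (muToy d N x
              * ((Rc d:ℝ) * 55 * Real.exp (Rc d) * dirToy d N g)) := by
              apply mul_le_mul_of_nonneg_left _ hC0
              exact mul_le_mul_of_nonneg_left hgx hμ
        _ = (1/120 + 2*(Rc d:ℝ)) * ((Rc d:ℝ) * 55 * Real.exp (Rc d) * dirToy d N g)
              * muToy d N x := by ring
      · rw [if_neg hxR]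
        have h0 : (0:ℝ) ≤ (Rc d:ℝ) * 55 * Real.exp (Rc d) * dirToy d N g := by
          have h1 : (0:ℝ) ≤ (Rc d:ℝ) := Nat.cast_nonneg _
          have h2 : (0:ℝ) ≤ Real.exp (Rc d) := (Real.exp_pos _).le
          have h3 := dir_nonneg (N := N) hd g
          exact mul_nonneg (mul_nonneg (mul_nonneg h1 (by norm_num : (0:ℝ) ≤ 55)) h2) h3
        exact mul_nonneg (mul_nonneg hC0 h0) hμ
    calc ∑ x ∈ Finset.range (N^d+1),
        (if x < Rc d then (1/120 + 2*(Rc d:ℝ)) * (muToy d N x * g x^2) else 0)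
        ≤ ∑ x ∈ Finset.range (N^d+1),
          (1/120 + 2*(Rc d:ℝ)) * ((Rc d:ℝ) * 55 * Real.exp (Rc d) * dirToy d N g)
            * muToy d N x := Finset.sum_le_sum hterm
    _ = (1/120 + 2*(Rc d:ℝ)) * ((Rc d:ℝ) * 55 * Real.exp (Rc d) * dirToy d N g)
          * ∑ x ∈ Finset.range (N^d+1), muToy d N x := by rw [← Finset.mul_sum]
    _ = (1/120 + 2*(Rc d:ℝ)) * ((Rc d:ℝ) * 55 * Real.exp (Rc d)) * dirToy d N g := by
        rw [sum_mu_eq_one hd]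
        ring
  -- F. conclude
  calc (1/120) * ∑ x ∈ Finset.range (N^d+1), muToy d N x * g x ^ 2
      ≤ (∑ x ∈ Finset.range (N^d),
          muToy d N x * bToy d x * ((1 - V (x+1)/V x) * g x ^2 + (1 - V x/V (x+1)) * g (x+1)^2))
        + ∑ x ∈ Finset.range (N^d+1),
          (if x < Rc d then (1/120 + 2*(Rc d:ℝ)) * (muToy d N x * g x^2) else 0) := hsum
  _ ≤ dirToy d N g
        + (1/120 + 2*(Rc d:ℝ)) * ((Rc d:ℝ) * 55 * Real.exp (Rc d)) * dirToy d N g := by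
      linarith
  _ = (1 + (1/120 + 2*(Rc d:ℝ)) * ((Rc d:ℝ) * 55 * Real.exp (Rc d))) * dirToy d N g := by
      ring

end Key

section Final

variable {d N : ℕ}

lemma poincare (hd : 3 ≤ d) (hN : 1 ≤ N) (f : ℕ → ℝ) :
    varToy d N f ≤ Kconst d * dirToy d N f := by
  have hsum1 := sum_mu_eq_one (N := N) (d := d) hd
  have hmean : meanToy d N f = ∑ x ∈ Finset.range (N^d+1), muToy d N x * f x := rfl
  have expand : ∀ a : ℝ, ∑ x ∈ Finset.range (N^d+1), muToy d N x * (f x - a)^2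
      = (∑ x ∈ Finset.range (N^d+1), muToy d N x * f x ^ 2)
        - 2*a*(meanToy d N f) + a^2 := by
    intro a
    have e1 : ∀ x ∈ Finset.range (N^d+1), muToy d N x * (f x - a)^2
        = muToy d N x * f x^2 - (2*a)*(muToy d N x * f x) + a^2 * muToy d N x :=
      fun x _ => by ring
    rw [Finset.sum_congr rfl e1, Finset.sum_add_distrib, Finset.sum_sub_distrib,
      ← Finset.mul_sum, ← Finset.mul_sum, hsum1, ← hmean]
    ring
  set h : ℕ → ℝ := fun x => f x - f 0 with hh
  have hvar : varToy d N f ≤ ∑ x ∈ Finset.range (N^d+1), muToy d N x * h x ^ 2 := by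
    have h1 := expand (meanToy d N f)
    have h2 := expand (f 0)
    have hbody : ∀ x ∈ Finset.range (N^d+1),
        muToy d N x * h x ^ 2 = muToy d N x * (f x - f 0)^2 := fun x _ => by rw [hh]
    rw [Finset.sum_congr rfl hbody, varToy, h1, h2]
    nlinarith [sq_nonneg (meanToy d N f - f 0)]
  have hdirh : dirToy d N h = dirToy d N f := by
    rw [dirToy, dirToy]
    exact Finset.sum_congr rfl fun x _ => by rw [hh]; ring_nf
  have hkey := key_bound hd hN h (by rw [hh]; ring)
  rw [hdirh] at hkey
  have h120 := mul_le_mul_of_nonneg_left hkey (by norm_num : (0:ℝ) ≤ 120)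
  calc varToy d N f ≤ ∑ x ∈ Finset.range (N^d+1), muToy d N x * h x ^ 2 := hvar
  _ = 120 * ((1/120) * ∑ x ∈ Finset.range (N^d+1), muToy d N x * h x ^ 2) := by ring
  _ ≤ 120 * ((1 + (1/120 + 2*(Rc d:ℝ)) * ((Rc d:ℝ) * 55 * Real.exp (Rc d)))
        * dirToy d N f) := h120
  _ = Kconst d * dirToy d N f := by rw [Kconst]; ring

end Final

end ToySpecAux

/-- For every `d ≥ 3` there is `k = k(d) > 0` such that `S(N,d) ≤ k`
uniformly in `N ≥ 1`. -/
theorem toy_invGap_bounded_high_dim (d : ℕ) (hd : 3 ≤ d) :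
    ∃ k : ℝ, 0 < k ∧ ∀ N : ℕ, 1 ≤ N → invGapToy d N ≤ k := by
  refine ⟨ToySpecAux.Kconst d, ToySpecAux.Kconst_pos d, fun N hN => ?_⟩
  have hmem : ToySpecAux.Kconst d ∈ {c : ℝ | ∀ f : ℕ → ℝ, varToy d N f ≤ c * dirToy d N f} :=
    fun f => ToySpecAux.poincare hd hN f
  rw [invGapToy]
  by_cases hb : BddBelow {c : ℝ | ∀ f : ℕ → ℝ, varToy d N f ≤ c * dirToy d N f}
  · exact csInf_le hb hmem
  · rw [Real.sInf_of_not_bddBelow hb]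
    exact (ToySpecAux.Kconst_pos d).le

end
end

section
/- Let α ∈ (0,1). There exists a constant k ≥ 1, depending only on α, such that for every integer x ≥ 1: (1/k) · x^{1-α} · exp(-x^α) ≤ ∑_{y=x}^{∞} exp(-y^α) ≤ k · x^{1-α} · exp(-x^α), where the sum runs over all integers y ≥ x (and is convergent). -/
/-!
Tail asymptotics of the measure `μ(x) ∝ exp(-x^α)`:
`∑_{y ≥ x} exp(-y^α) ≍ x^{1-α} exp(-x^α)`.
-/

private lemma core_concave {α a b : ℝ} (hα0 : 0 < α) (hα1 : α ≤ 1) (ha : 0 < a) (hab : a ≤ b) :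
    α * (b - a) * b ^ (α - 1) ≤ b ^ α - a ^ α := by
  have hb : 0 < b := lt_of_lt_of_le ha hab
  have hs0 : 0 ≤ a / b := by positivity
  have hgm := Real.geom_mean_le_arith_mean2_weighted (by linarith) hα0.le zero_le_one hs0
      (by ring : (1 - α) + α = 1)
  rw [Real.one_rpow, one_mul, mul_one] at hgm
  rw [Real.div_rpow ha.le hb.le] at hgm
  have hbα : 0 < b ^ α := Real.rpow_pos_of_pos hb _
  have h1 : a ^ α ≤ ((1 - α) + α * (a / b)) * b ^ α := by
    calc a ^ α = a ^ α / b ^ α * b ^ α := by field_simp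
      _ ≤ ((1 - α) + α * (a / b)) * b ^ α := mul_le_mul_of_nonneg_right hgm hbα.le
  have hba : b ^ (α - 1) = b ^ α / b := by
    rw [Real.rpow_sub hb, Real.rpow_one]
  rw [hba]
  have hbne : b ≠ 0 := hb.ne'
  have expand : ((1 - α) + α * (a / b)) * b ^ α = b ^ α - α * (b - a) * (b ^ α / b) := by
    field_simp
    ring
  rw [expand] at h1
  linarith

private lemma summable_exp_neg_mul_rpow {c α : ℝ} (hc : 0 < c) (hα : 0 < α) :
    Summable fun y : ℕ => Real.exp (-(c * (y : ℝ) ^ α)) := by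
  set n : ℕ := ⌈2 / α⌉₊ with hn
  have hn0 : 0 < n := Nat.ceil_pos.2 (by positivity)
  have hαn : (2 : ℝ) ≤ α * n := by
    have h2 : 2 / α ≤ (n : ℝ) := Nat.le_ceil _
    calc (2:ℝ) = α * (2 / α) := by field_simp
      _ ≤ α * n := by nlinarith
  set C : ℝ := (n : ℝ) ^ n / c ^ n with hC
  have hnR : (0:ℝ) < (n : ℝ) := by exact_mod_cast hn0
  have hCpos : 0 < C := by positivity
  rw [← summable_nat_add_iff 1]
  have hcomp : Summable fun y : ℕ => C * (1 / ((y : ℝ) + 1) ^ 2) := by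
    apply Summable.mul_left
    have h := (summable_nat_add_iff (f := fun y : ℕ => 1 / (y : ℝ) ^ 2) 1).2
      (Real.summable_one_div_nat_pow.2 (by norm_num))
    refine h.congr fun y => ?_
    push_cast
    ring
  refine Summable.of_nonneg_of_le (fun y => (Real.exp_pos _).le) (fun y => ?_) hcomp
  set r : ℝ := (y : ℝ) + 1 with hrdef
  have hr1 : 1 ≤ r := by
    have : (0:ℝ) ≤ (y:ℝ) := Nat.cast_nonneg y
    linarith
  have hr0 : 0 < r := by linarith
  have hcast : (((y + 1 : ℕ)) : ℝ) = r := by push_cast; ring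
  rw [hcast]
  set t : ℝ := c * r ^ α with ht
  have ht0 : 0 ≤ t := by positivity
  have h1 : (t / n) ^ n ≤ Real.exp t := by
    have h2 : t / n ≤ Real.exp (t / n) := by
      have := Real.add_one_le_exp (t / n); linarith
    calc (t / n) ^ n ≤ Real.exp (t / n) ^ n := pow_le_pow_left₀ (by positivity) h2 n
      _ = Real.exp t := by rw [← Real.exp_nat_mul]; congr 1; field_simp
  have h3 : r ^ (2:ℕ) ≤ (r ^ α) ^ n := by
    have hrw : (r ^ α) ^ n = r ^ (α * n) := by
      rw [← Real.rpow_natCast (r ^ α) n, ← Real.rpow_mul hr0.le]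
    rw [hrw]
    calc r ^ (2:ℕ) = r ^ ((2:ℕ):ℝ) := (Real.rpow_natCast r 2).symm
      _ ≤ r ^ (α * n) := Real.rpow_le_rpow_of_exponent_le hr1 (by exact_mod_cast hαn)
  have h4 : c ^ n * r ^ 2 / (n:ℝ) ^ n ≤ Real.exp t := by
    calc c ^ n * r ^ 2 / (n:ℝ) ^ n ≤ c ^ n * (r ^ α) ^ n / (n:ℝ) ^ n := by gcongr
      _ = (t / n) ^ n := by rw [ht, div_pow, mul_pow]
      _ ≤ Real.exp t := h1
  have h5 : 0 < c ^ n * r ^ 2 / (n:ℝ) ^ n := by positivity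
  rw [Real.exp_neg]
  calc (Real.exp t)⁻¹ ≤ (c ^ n * r ^ 2 / (n:ℝ) ^ n)⁻¹ := by
        exact inv_anti₀ h5 h4
    _ = C * (1 / r ^ 2) := by
        rw [hC]; field_simp

private def shiftEquiv (x : ℕ) : ℕ ≃ {y : ℕ // x ≤ y} where
  toFun := fun j => ⟨x + j, Nat.le_add_right _ _⟩
  invFun := fun y => y.1 - x
  left_inv := fun j => by simp
  right_inv := fun y => by ext; exact Nat.add_sub_cancel' y.2

/-- For `α ∈ (0,1)` there is `k ≥ 1` (depending only on `α`) such that for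
every integer `x ≥ 1`, the convergent series `∑_{y ≥ x} exp(-y^α)` is bounded
above and below by `k^{±1} · x^{1-α} · exp(-x^α)`. -/
theorem tail_sum_asymptotics (α : ℝ) (hα : α ∈ Set.Ioo (0 : ℝ) 1) :
    ∃ k : ℝ, 1 ≤ k ∧ ∀ x : ℕ, 1 ≤ x →
      Summable (fun y : {y : ℕ // x ≤ y} => Real.exp (-(y : ℝ) ^ α)) ∧
      (1 / k) * (x : ℝ) ^ (1 - α) * Real.exp (-(x : ℝ) ^ α) ≤
        (∑' y : {y : ℕ // x ≤ y}, Real.exp (-(y : ℝ) ^ α)) ∧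
      (∑' y : {y : ℕ // x ≤ y}, Real.exp (-(y : ℝ) ^ α)) ≤
        k * (x : ℝ) ^ (1 - α) * Real.exp (-(x : ℝ) ^ α) := by
  obtain ⟨hα0, hα1⟩ := hα
  set c₂ : ℝ := 1 - 2 ^ (-α) with hc₂def
  have hc₂pos : 0 < c₂ := by
    have h1 : (2:ℝ) ^ (-α) < 1 := Real.rpow_lt_one_of_one_lt_of_neg one_lt_two (by linarith)
    rw [hc₂def]; linarith
  have hSsum : Summable (fun y : ℕ => Real.exp (-(c₂ * (y:ℝ) ^ α))) :=
    summable_exp_neg_mul_rpow hc₂pos hα0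
  set S : ℝ := ∑' y : ℕ, Real.exp (-(c₂ * (y:ℝ) ^ α)) with hSdef
  have hSnonneg : 0 ≤ S := tsum_nonneg fun _ => (Real.exp_pos _).le
  have hk2 : (0:ℝ) < 2 * Real.exp 1 / α := by positivity
  refine ⟨Real.exp 2 + (2 * Real.exp 1 / α + S), ?_, fun x hx => ?_⟩
  · have h1 : (1:ℝ) ≤ Real.exp 2 := Real.one_le_exp (by norm_num)
    linarith
  set X : ℝ := (x : ℝ) with hXdef
  have hX1 : (1:ℝ) ≤ X := by rw [hXdef]; exact_mod_cast hx
  have hX0 : (0:ℝ) < X := by linarith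
  set g : ℕ → ℝ := fun j => Real.exp (-((x + j : ℕ) : ℝ) ^ α) with hgdef
  set c₁ : ℝ := α * (2 * X) ^ (α - 1) with hc₁def
  have h2X1 : (1:ℝ) ≤ 2 * X := by linarith
  have h2X0 : (0:ℝ) < 2 * X := by linarith
  have h2Xp : (0:ℝ) < (2 * X) ^ (α - 1) := Real.rpow_pos_of_pos h2X0 _
  have hc₁pos : 0 < c₁ := by rw [hc₁def]; positivity
  have hc₁le1 : c₁ ≤ 1 := by
    have h := Real.rpow_le_one_of_one_le_of_nonpos h2X1 (by linarith : α - 1 ≤ 0)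
    calc c₁ ≤ α * 1 := by
          rw [hc₁def]; exact mul_le_mul_of_nonneg_left h hα0.le
      _ ≤ 1 := by linarith
  set u : ℕ → ℝ := fun j => Real.exp (-c₁) ^ j with hudef
  set v : ℕ → ℝ := fun j => Real.exp (-(c₂ * ((x + j : ℕ) : ℝ) ^ α)) with hvdef
  -- pointwise key bound
  have hkey : ∀ j : ℕ, g j ≤ Real.exp (-X ^ α) * (u j + v j) := by
    intro j
    have hYcast : ((x + j : ℕ) : ℝ) = X + (j : ℝ) := by rw [hXdef]; push_cast; ring
    set Y : ℝ := X + (j : ℝ) with hYdef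
    have hj0 : (0:ℝ) ≤ (j:ℝ) := Nat.cast_nonneg j
    have hXY : X ≤ Y := by rw [hYdef]; linarith
    have hY0 : 0 < Y := lt_of_lt_of_le hX0 hXY
    have hupos : 0 < u j := pow_pos (Real.exp_pos _) j
    have hvpos : 0 < v j := Real.exp_pos _
    have hgY : g j = Real.exp (-Y ^ α) := by simp only [hgdef, hYcast]
    have hEpos : 0 < Real.exp (-X ^ α) := Real.exp_pos _
    have hdistrib : Real.exp (-X ^ α) * (u j + v j)
        = Real.exp (-X ^ α) * u j + Real.exp (-X ^ α) * v j := by ring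
    rcases le_or_gt (j : ℝ) X with hcase | hcase
    · have hY2X : Y ≤ 2 * X := by rw [hYdef]; linarith
      have hcore := core_concave hα0 hα1.le hX0 hXY
      have hmono : (2 * X) ^ (α - 1) ≤ Y ^ (α - 1) :=
        Real.rpow_le_rpow_of_nonpos hY0 hY2X (by linarith)
      have h1 : c₁ * j ≤ Y ^ α - X ^ α := by
        calc c₁ * j = α * (j : ℝ) * (2 * X) ^ (α - 1) := by rw [hc₁def]; ring
          _ ≤ α * (j : ℝ) * Y ^ (α - 1) := by
              exact mul_le_mul_of_nonneg_left hmono (by positivity)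
          _ = α * (Y - X) * Y ^ (α - 1) := by rw [hYdef]; ring_nf
          _ ≤ Y ^ α - X ^ α := hcore
      have hgu : g j ≤ Real.exp (-X ^ α) * u j := by
        rw [hgY]
        simp only [hudef]
        have hu' : Real.exp (-c₁) ^ j = Real.exp (-(c₁ * j)) := by
          rw [← Real.exp_nat_mul]; congr 1; ring
        rw [hu', ← Real.exp_add]
        exact Real.exp_le_exp.2 (by linarith)
      have := mul_pos hEpos hvpos
      rw [hdistrib]; linarith
    · have h2XY : 2 * X ≤ Y := by rw [hYdef]; linarith
      have hhalf : X ≤ Y / 2 := by linarith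
      have h2 : X ^ α ≤ (Y / 2) ^ α := Real.rpow_le_rpow hX0.le hhalf hα0.le
      have h3 : (Y / 2) ^ α = Y ^ α * 2 ^ (-α) := by
        rw [div_eq_mul_inv, Real.mul_rpow hY0.le (by positivity),
          Real.inv_rpow (by norm_num), ← Real.rpow_neg (by norm_num)]
      have h1 : X ^ α ≤ 2 ^ (-α) * Y ^ α := by rw [h3] at h2; linarith
      have hexpand : c₂ * Y ^ α = Y ^ α - 2 ^ (-α) * Y ^ α := by rw [hc₂def]; ring
      have h4 : X ^ α + c₂ * Y ^ α ≤ Y ^ α := by rw [hexpand]; linarith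
      have hgv : g j ≤ Real.exp (-X ^ α) * v j := by
        rw [hgY]
        simp only [hvdef, hYcast]
        rw [← Real.exp_add]
        exact Real.exp_le_exp.2 (by linarith)
      have := mul_pos hEpos hupos
      rw [hdistrib]; linarith
  -- summability
  have hexplt1 : Real.exp (-c₁) < 1 := Real.exp_lt_one_iff.2 (by linarith)
  have hu_sum : Summable u := summable_geometric_of_lt_one (Real.exp_pos _).le hexplt1
  have hv_sum : Summable v := hSsum.comp_injective (add_right_injective x)
  have hg_sum : Summable g :=
    Summable.of_nonneg_of_le (fun j => (Real.exp_pos _).le) hkey ((hu_sum.add hv_sum).mul_left _)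
  have hcomp : ∀ j : ℕ, Real.exp (-((shiftEquiv x j : ℕ) : ℝ) ^ α) = g j := fun j => rfl
  have hf_sum : Summable (fun y : {y : ℕ // x ≤ y} => Real.exp (-(y : ℝ) ^ α)) := by
    rw [← Equiv.summable_iff (shiftEquiv x)]
    exact hg_sum.congr fun j => (hcomp j).symm
  have htsum : (∑' y : {y : ℕ // x ≤ y}, Real.exp (-(y : ℝ) ^ α)) = ∑' j, g j := by
    rw [← Equiv.tsum_eq (shiftEquiv x) (fun y : {y : ℕ // x ≤ y} => Real.exp (-(y : ℝ) ^ α))]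
    exact tsum_congr hcomp
  refine ⟨hf_sum, ?_, ?_⟩
  · -- lower bound
    set n : ℕ := ⌈X ^ (1 - α)⌉₊ with hndef
    have hX1α : (1:ℝ) ≤ X ^ (1 - α) := Real.one_le_rpow hX1 (by linarith)
    have hn1 : X ^ (1 - α) ≤ (n : ℝ) := by rw [hndef]; exact Nat.le_ceil _
    have hn2 : (n : ℝ) ≤ 2 * X ^ (1 - α) := by
      rw [hndef]
      have := Nat.ceil_lt_add_one (by linarith : (0:ℝ) ≤ X ^ (1 - α))
      linarith
    have hterm : ∀ j ∈ Finset.range n, Real.exp (-X ^ α) * Real.exp (-2) ≤ g j := by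
      intro j hj
      have hjn : (j : ℝ) < (n : ℝ) := by exact_mod_cast Finset.mem_range.1 hj
      have hYcast : ((x + j : ℕ) : ℝ) = X + (j : ℝ) := by rw [hXdef]; push_cast; ring
      have hXma : X * X ^ (-α) = X ^ (1 - α) := by
        rw [show (1 - α) = 1 + (-α) by ring, Real.rpow_add hX0, Real.rpow_one]
      have hA : X + 2 * X ^ (1 - α) = X * (1 + 2 * X ^ (-α)) := by
        rw [← hXma]; ring
      have hXαα : X ^ α * X ^ (-α) = 1 := by
        rw [← Real.rpow_add hX0]; simp
      have hXj : X + (j : ℝ) ≤ X + 2 * X ^ (1 - α) := by linarith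
      have hbase1 : (1:ℝ) ≤ 1 + 2 * X ^ (-α) := by
        have := Real.rpow_pos_of_pos hX0 (-α); linarith
      have hkey2 : (X + (j : ℝ)) ^ α ≤ X ^ α + 2 := by
        calc (X + (j:ℝ)) ^ α ≤ (X * (1 + 2 * X ^ (-α))) ^ α := by
              rw [← hA]
              refine Real.rpow_le_rpow (by positivity) hXj hα0.le
          _ = X ^ α * (1 + 2 * X ^ (-α)) ^ α := Real.mul_rpow hX0.le (by linarith)
          _ ≤ X ^ α * (1 + 2 * X ^ (-α)) := by
              refine mul_le_mul_of_nonneg_left ?_ (Real.rpow_nonneg hX0.le α)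
              calc (1 + 2 * X ^ (-α)) ^ α ≤ (1 + 2 * X ^ (-α)) ^ (1:ℝ) :=
                    Real.rpow_le_rpow_of_exponent_le hbase1 hα1.le
                _ = 1 + 2 * X ^ (-α) := Real.rpow_one _
          _ = X ^ α + 2 * (X ^ α * X ^ (-α)) := by ring
          _ = X ^ α + 2 := by rw [hXαα]; ring
      have hEE : Real.exp (-X ^ α) * Real.exp (-2) = Real.exp (-(X ^ α + 2)) := by
        rw [← Real.exp_add]; ring_nf
      rw [hEE]
      simp only [hgdef, hYcast]
      exact Real.exp_le_exp.2 (by linarith)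
    have hlow : X ^ (1 - α) * (Real.exp (-X ^ α) * Real.exp (-2)) ≤ ∑' j, g j := by
      calc X ^ (1 - α) * (Real.exp (-X ^ α) * Real.exp (-2))
          ≤ (n : ℝ) * (Real.exp (-X ^ α) * Real.exp (-2)) :=
            mul_le_mul_of_nonneg_right hn1 (by positivity)
        _ = (Finset.range n).card • (Real.exp (-X ^ α) * Real.exp (-2)) := by
            simp [nsmul_eq_mul]
        _ ≤ ∑ j ∈ Finset.range n, g j := Finset.card_nsmul_le_sum _ _ _ hterm
        _ ≤ ∑' j, g j := Summable.sum_le_tsum _ (fun j _ => (Real.exp_pos _).le) hg_sum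
    rw [htsum]
    have hkexp : 1 / (Real.exp 2 + (2 * Real.exp 1 / α + S)) ≤ Real.exp (-2) := by
      rw [Real.exp_neg, one_div]
      exact inv_anti₀ (Real.exp_pos 2) (by linarith)
    calc 1 / (Real.exp 2 + (2 * Real.exp 1 / α + S)) * X ^ (1 - α) * Real.exp (-X ^ α)
        ≤ Real.exp (-2) * X ^ (1 - α) * Real.exp (-X ^ α) := by
          have h1 : (0:ℝ) ≤ X ^ (1 - α) := Real.rpow_nonneg hX0.le _
          have h2 : (0:ℝ) ≤ Real.exp (-X ^ α) := (Real.exp_pos _).le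
          exact mul_le_mul_of_nonneg_right (mul_le_mul_of_nonneg_right hkexp h1) h2
      _ = X ^ (1 - α) * (Real.exp (-X ^ α) * Real.exp (-2)) := by ring
      _ ≤ ∑' j, g j := hlow
  · -- upper bound
    have hu_tsum : ∑' j, u j = (1 - Real.exp (-c₁))⁻¹ :=
      tsum_geometric_of_lt_one (Real.exp_pos _).le hexplt1
    have hu_bound : (1 - Real.exp (-c₁))⁻¹ ≤ Real.exp 1 / c₁ := by
      have h2 := Real.add_one_le_exp c₁
      have h3 : Real.exp (-1) ≤ Real.exp (-c₁) := Real.exp_le_exp.2 (by linarith)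
      have h4 : (c₁ + 1) * Real.exp (-c₁) ≤ 1 := by
        have h5 := mul_le_mul_of_nonneg_right h2 (Real.exp_pos (-c₁)).le
        rwa [← Real.exp_add, add_neg_cancel, Real.exp_zero] at h5
      have h1 : c₁ * Real.exp (-1) ≤ 1 - Real.exp (-c₁) := by nlinarith [Real.exp_pos (-c₁)]
      have h5 : 0 < c₁ * Real.exp (-1) := by positivity
      calc (1 - Real.exp (-c₁))⁻¹ ≤ (c₁ * Real.exp (-1))⁻¹ := inv_anti₀ h5 h1
        _ = Real.exp 1 / c₁ := by
            rw [Real.exp_neg]; field_simp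
    have hv_tsum : ∑' j, v j ≤ S := by
      rw [hSdef]
      exact Summable.tsum_le_tsum_of_inj (fun j => x + j) (add_right_injective x)
        (fun c _ => (Real.exp_pos _).le) (fun j => le_rfl) hv_sum hSsum
    have hup : ∑' j, g j ≤ Real.exp (-X ^ α) * ((1 - Real.exp (-c₁))⁻¹ + S) := by
      calc ∑' j, g j ≤ ∑' j, Real.exp (-X ^ α) * (u j + v j) :=
            Summable.tsum_le_tsum hkey hg_sum ((hu_sum.add hv_sum).mul_left _)
        _ = Real.exp (-X ^ α) * ∑' j, (u j + v j) := tsum_mul_left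
        _ = Real.exp (-X ^ α) * ((∑' j, u j) + ∑' j, v j) := by rw [Summable.tsum_add hu_sum hv_sum]
        _ ≤ _ := by
            refine mul_le_mul_of_nonneg_left ?_ (Real.exp_pos _).le
            exact add_le_add (le_of_eq hu_tsum) hv_tsum
    have hX1α : (1:ℝ) ≤ X ^ (1 - α) := Real.one_le_rpow hX1 (by linarith)
    have hc₁inv : Real.exp 1 / c₁ = Real.exp 1 * (2 * X) ^ (1 - α) / α := by
      rw [hc₁def, show (1 - α) = -(α - 1) by ring, Real.rpow_neg h2X0.le]
      field_simp
    have h2Xpow : (2 * X) ^ (1 - α) ≤ 2 * X ^ (1 - α) := by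
      rw [Real.mul_rpow (by norm_num) hX0.le]
      refine mul_le_mul_of_nonneg_right ?_ (Real.rpow_nonneg hX0.le _)
      calc (2:ℝ) ^ (1 - α) ≤ 2 ^ (1:ℝ) :=
            Real.rpow_le_rpow_of_exponent_le one_le_two (by linarith)
        _ = 2 := Real.rpow_one 2
    have hfinal : (1 - Real.exp (-c₁))⁻¹ + S ≤ (2 * Real.exp 1 / α + S) * X ^ (1 - α) := by
      have e1 : (1 - Real.exp (-c₁))⁻¹ ≤ Real.exp 1 * (2 * X) ^ (1 - α) / α :=
        hc₁inv ▸ hu_bound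
      have e2 : Real.exp 1 * (2 * X) ^ (1 - α) / α ≤ 2 * Real.exp 1 / α * X ^ (1 - α) := by
        calc Real.exp 1 * (2 * X) ^ (1 - α) / α ≤ Real.exp 1 * (2 * X ^ (1 - α)) / α := by
              gcongr
          _ = 2 * Real.exp 1 / α * X ^ (1 - α) := by ring
      have e3 : S ≤ S * X ^ (1 - α) := le_mul_of_one_le_right hSnonneg hX1α
      calc (1 - Real.exp (-c₁))⁻¹ + S
          ≤ 2 * Real.exp 1 / α * X ^ (1 - α) + S * X ^ (1 - α) := add_le_add (e1.trans e2) e3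
        _ = (2 * Real.exp 1 / α + S) * X ^ (1 - α) := by ring
    rw [htsum]
    calc ∑' j, g j ≤ Real.exp (-X ^ α) * ((1 - Real.exp (-c₁))⁻¹ + S) := hup
      _ ≤ Real.exp (-X ^ α) * ((2 * Real.exp 1 / α + S) * X ^ (1 - α)) :=
          mul_le_mul_of_nonneg_left hfinal (Real.exp_pos _).le
      _ = (2 * Real.exp 1 / α + S) * X ^ (1 - α) * Real.exp (-X ^ α) := by ring
      _ ≤ (Real.exp 2 + (2 * Real.exp 1 / α + S)) * X ^ (1 - α) * Real.exp (-X ^ α) := by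
          have h1 : (0:ℝ) ≤ X ^ (1 - α) := Real.rpow_nonneg hX0.le _
          have h2 : (0:ℝ) ≤ Real.exp (-X ^ α) := (Real.exp_pos _).le
          have h3 : 2 * Real.exp 1 / α + S ≤ Real.exp 2 + (2 * Real.exp 1 / α + S) := by
            linarith [Real.exp_pos 2]
          exact mul_le_mul_of_nonneg_right (mul_le_mul_of_nonneg_right h3 h1) h2
end

section
/- Let α ∈ (0,1). For every integer x ≥ 1 the drift of the birth-and-death toy model at site x+1 is strictly negative: (x+1)^α < x^α · exp((x+1)^α - x^α). Moreover there exists a constant k ≥ 1, depending only on α, such that for every integer x ≥ 1: (1/k) · x^{2α-1} ≤ x^α · exp((x+1)^α - x^α) - (x+1)^α ≤ k · x^{2α-1}. -/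
set_option maxHeartbeats 1000000


/-!
Negative drift of the birth-and-death toy model: with birth rate
`b(x) = x^α` and death rate `d(x+1) = x^α exp((x+1)^α - x^α)`, the drift
`b(x+1) - d(x+1)` is strictly negative and of order `-x^{2α-1}`.
-/

/-- Bernoulli-type bounds on the increment `(t+1)^α - t^α`. -/
lemma toy_delta_bounds (α : ℝ) (hα0 : 0 < α) (hα1 : α < 1) {t : ℝ} (ht : 1 ≤ t) :
    α * (t + 1) ^ (α - 1) ≤ (t + 1) ^ α - t ^ α ∧
      (t + 1) ^ α - t ^ α ≤ α * t ^ (α - 1) := by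
  have ht0 : 0 < t := lt_of_lt_of_le one_pos ht
  have hu0 : 0 < t + 1 := by linarith
  constructor
  · -- lower bound: t^α = ((t+1)(1 - 1/(t+1)))^α ≤ (t+1)^α (1 - α/(t+1))
    have hb : (1 + (-(1 / (t + 1)))) ^ α ≤ 1 + α * (-(1 / (t + 1))) := by
      apply rpow_one_add_le_one_add_mul_self _ hα0.le hα1.le
      have : 1 / (t + 1) ≤ 1 := by
        rw [div_le_one hu0]; linarith
      linarith
    have h1 : t ^ α = (t + 1) ^ α * (1 + (-(1 / (t + 1)))) ^ α := by
      rw [← Real.mul_rpow hu0.le (by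
        have : 1 / (t + 1) ≤ 1 := by rw [div_le_one hu0]; linarith
        linarith)]
      congr 1
      field_simp
      ring
    have h2 : t ^ α ≤ (t + 1) ^ α * (1 + α * (-(1 / (t + 1)))) := by
      rw [h1]
      exact mul_le_mul_of_nonneg_left hb (Real.rpow_nonneg hu0.le α)
    have h3 : (t + 1) ^ α * (1 / (t + 1)) = (t + 1) ^ (α - 1) := by
      rw [Real.rpow_sub hu0, Real.rpow_one]; ring
    nlinarith [h2, h3]
  · -- upper bound: (t+1)^α = (t(1 + 1/t))^α ≤ t^α (1 + α/t)
    have hb : (1 + 1 / t) ^ α ≤ 1 + α * (1 / t) := by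
      apply rpow_one_add_le_one_add_mul_self _ hα0.le hα1.le
      have : (0:ℝ) ≤ 1 / t := by positivity
      linarith
    have h1 : (t + 1) ^ α = t ^ α * (1 + 1 / t) ^ α := by
      rw [← Real.mul_rpow ht0.le (by positivity)]
      congr 1
      field_simp
    have h2 : (t + 1) ^ α ≤ t ^ α * (1 + α * (1 / t)) := by
      rw [h1]
      exact mul_le_mul_of_nonneg_left hb (Real.rpow_nonneg ht0.le α)
    have h3 : t ^ α * (1 / t) = t ^ (α - 1) := by
      rw [Real.rpow_sub ht0, Real.rpow_one]; ring
    nlinarith [h2, h3]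

/-- The key pointwise estimates for the drift, with explicit constants. -/
lemma toy_drift_key (α : ℝ) (hα0 : 0 < α) (hα1 : α < 1) {t : ℝ} (ht : 1 ≤ t) :
    ((t + 1) ^ α < t ^ α * Real.exp ((t + 1) ^ α - t ^ α)) ∧
    (min (α * 2 ^ (α - 1) / 2) ((α * 2 ^ (α - 1)) ^ 2 / (2 * 2 ^ (1 / α)))
        * t ^ (2 * α - 1) ≤
      t ^ α * Real.exp ((t + 1) ^ α - t ^ α) - (t + 1) ^ α) ∧
    (t ^ α * Real.exp ((t + 1) ^ α - t ^ α) - (t + 1) ^ α ≤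
      Real.exp 1 * t ^ (2 * α - 1)) := by
  have ht0 : 0 < t := lt_of_lt_of_le one_pos ht
  set c1 : ℝ := α * 2 ^ (α - 1) with hc1def
  have hc1 : 0 < c1 := by positivity
  set M : ℝ := 2 ^ (1 / α) with hMdef
  have hM : 0 < M := by positivity
  obtain ⟨hδl, hδu⟩ := toy_delta_bounds α hα0 hα1 ht
  set δ : ℝ := (t + 1) ^ α - t ^ α with hδdef
  have hA1 : 1 ≤ t ^ α := Real.one_le_rpow ht hα0.le
  have htpow1 : t ^ (α - 1) ≤ 1 :=
    Real.rpow_le_one_of_one_le_of_nonpos ht (by linarith)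
  have hδpos : 0 < δ := by
    have := Real.rpow_lt_rpow ht0.le (by linarith : t < t + 1) hα0
    simp only [hδdef]; linarith
  have hδ1 : δ ≤ 1 := by nlinarith
  have hsplit : t ^ (2 * α - 1) = t ^ α * t ^ (α - 1) := by
    rw [← Real.rpow_add ht0]; ring_nf
  have hpow21pos : 0 < t ^ (2 * α - 1) := Real.rpow_pos_of_pos ht0 _
  have h2t : (t + 1) ^ (α - 1) ≥ (2 * t) ^ (α - 1) :=
    Real.rpow_le_rpow_of_nonpos (by linarith) (by linarith) (by linarith)
  have h2t' : (2 * t) ^ (α - 1) = 2 ^ (α - 1) * t ^ (α - 1) :=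
    Real.mul_rpow (by norm_num) ht0.le
  have hδl' : c1 * t ^ (α - 1) ≤ δ := by
    have h : c1 * t ^ (α - 1) = α * (2 ^ (α - 1) * t ^ (α - 1)) := by rw [hc1def]; ring
    rw [h, ← h2t']
    calc α * (2 * t) ^ (α - 1) ≤ α * (t + 1) ^ (α - 1) :=
          mul_le_mul_of_nonneg_left h2t hα0.le
      _ ≤ δ := hδl
  have hδu' : δ ≤ α * t ^ (α - 1) := hδu
  have hE2 : 1 + δ + δ ^ 2 / 2 ≤ Real.exp δ := Real.quadratic_le_exp_of_nonneg hδpos.le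
  have hEstrict : δ + 1 < Real.exp δ := Real.add_one_lt_exp hδpos.ne'
  have hneg : (t + 1) ^ α < t ^ α * Real.exp δ := by
    have h1 : (t + 1) ^ α = t ^ α + δ := by simp [hδdef]
    nlinarith [hEstrict, hA1]
  have hD : t ^ α * Real.exp δ - (t + 1) ^ α = t ^ α * (Real.exp δ - 1) - δ := by
    have h : (t + 1) ^ α = t ^ α + δ := by simp [hδdef]
    rw [h]; ring
  refine ⟨hneg, ?_, ?_⟩
  · -- lower bound
    rw [hD]
    have hbase : (t ^ α - 1) * δ + δ ^ 2 / 2 ≤ t ^ α * (Real.exp δ - 1) - δ := by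
      nlinarith [hE2, hA1, hδpos]
    rcases le_or_gt 2 (t ^ α) with h2 | h2
    · have hstep : c1 / 2 * t ^ (2 * α - 1) ≤ (t ^ α - 1) * δ := by
        have h1 : t ^ α / 2 ≤ t ^ α - 1 := by linarith
        have hh := mul_le_mul h1 hδl' (by positivity) (by nlinarith)
        calc c1 / 2 * t ^ (2 * α - 1) = t ^ α / 2 * (c1 * t ^ (α - 1)) := by
              rw [hsplit]; ring
          _ ≤ (t ^ α - 1) * δ := hh
      have hcle : min (c1 / 2) (c1 ^ 2 / (2 * M)) ≤ c1 / 2 := min_le_left _ _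
      nlinarith [hbase, hstep, sq_nonneg δ,
        mul_le_mul_of_nonneg_right hcle hpow21pos.le]
    · have htM : t ≤ M := by
        have h1 : t ^ α ≤ 2 := h2.le
        have h2' : (t ^ α) ^ (1 / α) ≤ 2 ^ (1 / α) :=
          Real.rpow_le_rpow (by positivity) h1 (by positivity)
        have hid : (t ^ α) ^ (1 / α) = t := by
          rw [one_div]; exact Real.rpow_rpow_inv ht0.le hα0.ne'
        rw [hMdef]; rw [hid] at h2'; exact h2'
      have hstep : c1 ^ 2 / (2 * M) * t ^ (2 * α - 1) ≤ δ ^ 2 / 2 := by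
        have h1 : (c1 * t ^ (α - 1)) ^ 2 ≤ δ ^ 2 := by
          apply sq_le_sq' _ hδl'
          nlinarith [hδpos, mul_pos hc1 (Real.rpow_pos_of_pos ht0 (α - 1))]
        have h2' : t ^ (α - 1) * t ^ (α - 1) = t ^ (2 * α - 1) / t := by
          rw [← Real.rpow_add ht0, eq_div_iff ht0.ne']
          calc t ^ (α - 1 + (α - 1)) * t = t ^ (α - 1 + (α - 1)) * t ^ (1 : ℝ) := by
                rw [Real.rpow_one]
            _ = t ^ (2 * α - 1) := by rw [← Real.rpow_add ht0]; ring_nf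
        have h3 : t ^ (2 * α - 1) / M ≤ t ^ (2 * α - 1) / t :=
          div_le_div_of_nonneg_left hpow21pos.le ht0 htM
        calc c1 ^ 2 / (2 * M) * t ^ (2 * α - 1) = c1 ^ 2 * (t ^ (2 * α - 1) / M) / 2 := by
              ring
          _ ≤ c1 ^ 2 * (t ^ (2 * α - 1) / t) / 2 := by nlinarith [h3, sq_nonneg c1]
          _ = (c1 * t ^ (α - 1)) ^ 2 / 2 := by rw [← h2']; ring
          _ ≤ δ ^ 2 / 2 := (div_le_div_iff_of_pos_right (by norm_num : (0:ℝ) < 2)).mpr h1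
      have hcle : min (c1 / 2) (c1 ^ 2 / (2 * M)) ≤ c1 ^ 2 / (2 * M) := min_le_right _ _
      have hmono : 0 ≤ (t ^ α - 1) * δ := mul_nonneg (by linarith) hδpos.le
      nlinarith [hbase, hstep, mul_le_mul_of_nonneg_right hcle hpow21pos.le]
  · -- upper bound
    rw [hD]
    have hEδ : Real.exp δ ≤ Real.exp 1 := Real.exp_le_exp.mpr hδ1
    have hE3 : Real.exp δ - 1 ≤ δ * Real.exp δ := by
      have h1 : 1 - δ ≤ Real.exp (-δ) := by
        have := Real.add_one_le_exp (-δ); linarith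
      have h2 : Real.exp (-δ) * Real.exp δ = 1 := by
        rw [← Real.exp_add]; simp
      nlinarith [Real.exp_pos δ]
    have h1 : t ^ α * (Real.exp δ - 1) ≤ t ^ α * (δ * Real.exp 1) := by
      apply mul_le_mul_of_nonneg_left _ (Real.rpow_nonneg ht0.le α)
      calc Real.exp δ - 1 ≤ δ * Real.exp δ := hE3
        _ ≤ δ * Real.exp 1 := mul_le_mul_of_nonneg_left hEδ hδpos.le
    have h2 : t ^ α * (δ * Real.exp 1) ≤ Real.exp 1 * t ^ (2 * α - 1) := by
      rw [hsplit]
      have hδ' : δ ≤ t ^ (α - 1) := by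
        nlinarith [hδu', Real.rpow_pos_of_pos ht0 (α - 1)]
      have hh : t ^ α * δ ≤ t ^ α * t ^ (α - 1) :=
        mul_le_mul_of_nonneg_left hδ' (Real.rpow_nonneg ht0.le α)
      nlinarith [Real.exp_pos 1]
    nlinarith [h1, h2, hδpos]

/-- For `α ∈ (0,1)`: the drift at `x+1` is strictly negative for every
integer `x ≥ 1`, i.e. `(x+1)^α < x^α exp((x+1)^α - x^α)`, and there is
`k ≥ 1` (depending only on `α`) such that for every integer `x ≥ 1`,
`(1/k) x^{2α-1} ≤ x^α exp((x+1)^α - x^α) - (x+1)^α ≤ k x^{2α-1}`. -/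
theorem toy_model_negative_drift (α : ℝ) (hα : α ∈ Set.Ioo (0 : ℝ) 1) :
    (∀ x : ℕ, 1 ≤ x →
      ((x : ℝ) + 1) ^ α < (x : ℝ) ^ α * Real.exp (((x : ℝ) + 1) ^ α - (x : ℝ) ^ α)) ∧
    ∃ k : ℝ, 1 ≤ k ∧ ∀ x : ℕ, 1 ≤ x →
      (1 / k) * (x : ℝ) ^ (2 * α - 1) ≤
        (x : ℝ) ^ α * Real.exp (((x : ℝ) + 1) ^ α - (x : ℝ) ^ α) - ((x : ℝ) + 1) ^ α ∧
      (x : ℝ) ^ α * Real.exp (((x : ℝ) + 1) ^ α - (x : ℝ) ^ α) - ((x : ℝ) + 1) ^ α ≤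
        k * (x : ℝ) ^ (2 * α - 1) := by
  obtain ⟨hα0, hα1⟩ := hα
  have hcast : ∀ x : ℕ, 1 ≤ x → (1 : ℝ) ≤ (x : ℝ) := fun x hx => by exact_mod_cast hx
  refine ⟨fun x hx => (toy_drift_key α hα0 hα1 (hcast x hx)).1, ?_⟩
  set c : ℝ := min (α * 2 ^ (α - 1) / 2) ((α * 2 ^ (α - 1)) ^ 2 / (2 * 2 ^ (1 / α)))
    with hcdef
  have hc : 0 < c := lt_min (by positivity) (by positivity)
  refine ⟨max (Real.exp 1) (1 / c), le_trans (Real.one_le_exp zero_le_one)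
    (le_max_left _ _), fun x hx => ?_⟩
  have ht := hcast x hx
  have hpow : (0 : ℝ) < (x : ℝ) ^ (2 * α - 1) :=
    Real.rpow_pos_of_pos (by linarith) _
  obtain ⟨_, hlo, hhi⟩ := toy_drift_key α hα0 hα1 ht
  have hkc : 1 / max (Real.exp 1) (1 / c) ≤ c := by
    calc 1 / max (Real.exp 1) (1 / c) ≤ 1 / (1 / c) :=
        one_div_le_one_div_of_le (by positivity) (le_max_right _ _)
      _ = c := one_div_one_div c
  constructor
  · calc 1 / max (Real.exp 1) (1 / c) * (x : ℝ) ^ (2 * α - 1)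
        ≤ c * (x : ℝ) ^ (2 * α - 1) := mul_le_mul_of_nonneg_right hkc hpow.le
      _ ≤ _ := hlo
  · calc _ ≤ Real.exp 1 * (x : ℝ) ^ (2 * α - 1) := hhi
      _ ≤ max (Real.exp 1) (1 / c) * (x : ℝ) ^ (2 * α - 1) :=
        mul_le_mul_of_nonneg_right (le_max_left _ _) hpow.le
end
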